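/- arXiv:1607.08225 — 3 statements merged into one kernel-verified Lean document; each statement's English description precedes it below -/
import Mathlib

section
/- Let T be a semi-standard Young tableau with entries in {1 < ... < n < n̄ < ... < 1̄} satisfying the row-entry restriction (entry count (i,j) = 0 unless i = j or i = k̄ with k < j) and having the cancellation property. Then the word w(T) (right-to-left, top-to-bottom reading) is dominant if and only if the word w'(T) (row-by-row right-to-left reading) is dominant. Here a word is dominant if every initial subword has weight lying in the dominant Weyl chamber of sp(2n), i.e., for each i, in every prefix the quantity #i − #(i+1) + #(i+1)-bar − #ī is ≥ 0 when accumulated appropriately (all partial weights μ_{w_1},...,μ_{w_k} are dominant). -/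
open scoped BigOperators

/-- The ordered alphabet `C_n = {1 < ⋯ < n < n̄ < ⋯ < 1̄}`.  `Sum.inl i` denotes the
unbarred letter `i+1` and `Sum.inr i` the barred letter `(i+1)‾` (0-indexed). -/
abbrev Letter (n : ℕ) := Fin n ⊕ Fin n

/-- Position of a letter in the total order `1 < ⋯ < n < n̄ < ⋯ < 1̄`. -/
def Letter.idx {n : ℕ} : Letter n → ℕ
  | Sum.inl i => (i : ℕ)
  | Sum.inr i => 2 * n - 1 - (i : ℕ)

/-- A semi-standard Young tableau with entries in the alphabet `C_n`,
encoded by its row lengths (the shape) and its entries. -/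
structure SSYT (n : ℕ) where
  rowLen : ℕ → ℕ
  entry : ℕ → ℕ → Option (Letter n)
  shape_antitone : ∀ r, rowLen (r + 1) ≤ rowLen r
  rows_bounded : ∀ r, 2 * n ≤ r → rowLen r = 0
  entry_isSome_iff : ∀ r c, (entry r c).isSome ↔ c < rowLen r
  rows_weak : ∀ r c₁ c₂ l₁ l₂, c₁ ≤ c₂ → entry r c₁ = some l₁ → entry r c₂ = some l₂ →
    l₁.idx ≤ l₂.idx
  cols_strict : ∀ r₁ r₂ c l₁ l₂, r₁ < r₂ → entry r₁ c = some l₁ → entry r₂ c = some l₂ →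
    l₁.idx < l₂.idx

namespace SSYT

variable {n : ℕ}

/-- The positions of the boxes of `T` in reading order of the word `w(T)`:
columns right to left, each column top to bottom. -/
def posList (T : SSYT n) : List (ℕ × ℕ) :=
  ((List.range (T.rowLen 0)).reverse).flatMap fun c =>
    (List.range (2 * n)).filterMap fun r =>
      if c < T.rowLen r then some (r, c) else none

/-- The word `w(T)` of the tableau, read right to left and top to bottom. -/
def word (T : SSYT n) : List (Letter n) :=
  T.posList.filterMap fun p => T.entry p.1 p.2

/-- The far-eastern word `w'(T)`: rows read right to left, top to bottom. -/
def wordFE (T : SSYT n) : List (Letter n) :=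
  (List.range (2 * n)).flatMap fun r =>
    ((List.range (T.rowLen r)).reverse).filterMap fun c => T.entry r c

/-- `(i,j)`: the number of occurrences of the letter `l` in row `r` of `T`. -/
def count (T : SSYT n) (l : Letter n) (r : ℕ) : ℕ :=
  ((List.range (T.rowLen r)).filter fun c => T.entry r c = some l).length

end SSYT

/-- The cancellation property of a word: every barred letter `ī` has an unbarred `i`
strictly to its right. -/
def Cancel {n : ℕ} (w : List (Letter n)) : Prop :=
  ∀ (p : ℕ) (i : Fin n), w[p]? = some (Sum.inr i) →
    ∃ q, p < q ∧ w[q]? = some (Sum.inl i)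

/-- The weight of a letter: `i` contributes `+ε_i`, `ī` contributes `-ε_i`. -/
def wt {n : ℕ} (l : Letter n) (j : ℕ) : ℤ :=
  match l with
  | Sum.inl i => if (i : ℕ) = j then 1 else 0
  | Sum.inr i => if (i : ℕ) = j then -1 else 0

/-- The `j`-th coordinate of the weight of a word. -/
def wsum {n : ℕ} (w : List (Letter n)) (j : ℕ) : ℤ := (w.map fun l => wt l j).sum

/-- A word is dominant if every prefix has dominant weight `a₁ ≥ a₂ ≥ ⋯ ≥ a_n ≥ 0`
(coordinates `j ≥ n` of `wsum` vanish, so this includes `a_n ≥ 0`). -/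
def Dominant {n : ℕ} (w : List (Letter n)) : Prop :=
  ∀ k j, wsum (w.take k) (j + 1) ≤ wsum (w.take k) j

/-- `domres(λ, μ)`: semi-standard Young tableaux of shape `λ`, word weight `μ`,
whose word is dominant. -/
def domresSet (n : ℕ) (lam mu : ℕ → ℕ) : Set (SSYT n) :=
  {T | T.rowLen = lam ∧ (∀ j, wsum T.word j = (mu j : ℤ)) ∧ Dominant T.word}

/-- The row-entry restriction: row `r` (0-indexed) contains only the unbarred letter `r`
and barred letters `k̄` with `k < r`. -/
def RowRestriction {n : ℕ} (T : SSYT n) : Prop :=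
  ∀ (r : ℕ) (l : Letter n), T.count l r ≠ 0 →
    (∃ h : r < n, l = Sum.inl ⟨r, h⟩) ∨ (∃ k : Fin n, (k : ℕ) < r ∧ l = Sum.inr k)

namespace DomProof

open List Finset

/-! ### Generic list lemmas -/

lemma sum_map_sub {α : Type*} (f g : α → ℤ) (v : List α) :
    (v.map fun l => f l - g l).sum = (v.map f).sum - (v.map g).sum := by
  induction v with
  | nil => simp
  | cons a t ih => simp [ih]; ring

lemma filterMap_eq_map' {α β : Type*} (f : α → Option β) (g : α → β) :
    ∀ (l : List α), (∀ a ∈ l, f a = some (g a)) → l.filterMap f = l.map g := by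
  intro l
  induction l with
  | nil => simp
  | cons a t ih =>
    intro h
    simp only [List.filterMap_cons, h a (by simp), List.map_cons]
    rw [ih (fun x hx => h x (by simp [hx]))]

lemma sum_filterMap_getD (f : ℕ → Option ℤ) :
    ∀ (l : List ℕ), (l.filterMap f).sum = (l.map fun a => (f a).getD 0).sum := by
  intro l
  induction l with
  | nil => simp
  | cons a t ih =>
    rcases h : f a with _ | b <;> simp [List.filterMap_cons, h, ih]

lemma take_filterMap {α β : Type*} (f : α → Option β) :
    ∀ (l : List α) (m : ℕ), ∃ i, (l.filterMap f).take m = (l.take i).filterMap f := by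
  intro l
  induction l with
  | nil => intro m; exact ⟨0, by simp⟩
  | cons a t ih =>
    intro m
    rcases h : f a with _ | b
    · obtain ⟨i, hi⟩ := ih m
      exact ⟨i + 1, by simp [List.filterMap_cons, h, hi]⟩
    · cases m with
      | zero => exact ⟨0, by simp⟩
      | succ m =>
        obtain ⟨i, hi⟩ := ih m
        exact ⟨i + 1, by simp [List.filterMap_cons, h, hi]⟩

lemma filterMap_take_realize {α β : Type*} (f : α → Option β) (l : List α) (i : ℕ) :
    ∃ m, m ≤ (l.filterMap f).length ∧
      (l.filterMap f).take m = (l.take i).filterMap f := by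
  refine ⟨((l.take i).filterMap f).length, ?_, ?_⟩
  · conv_rhs => rw [← List.take_append_drop i l]
    rw [List.filterMap_append]
    simp
  · conv_lhs =>
      rw [show l.filterMap f = (l.take i).filterMap f ++ (l.drop i).filterMap f by
        rw [← List.filterMap_append, List.take_append_drop]]
    exact List.take_left

lemma flatten_take_sum (M : List (List ℤ)) :
    ∀ k, ∃ i m, i ≤ M.length ∧
      ((M.flatten.take k)).sum = ((M.take i).flatten).sum + ((M.getD i []).take m).sum := by
  induction M with
  | nil => intro k; exact ⟨0, 0, by simp⟩
  | cons L M' ih =>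
    intro k
    by_cases hk : k ≤ L.length
    · refine ⟨0, k, by simp, ?_⟩
      simp [List.flatten_cons, List.take_append_of_le_length hk]
    · obtain ⟨i, m, hi, hs⟩ := ih (k - L.length)
      refine ⟨i + 1, m, by simpa using hi, ?_⟩
      have : (L ++ M'.flatten).take k = L ++ M'.flatten.take (k - L.length) := by
        rw [List.take_append, List.take_of_length_le (by omega)]
      simp [List.flatten_cons, this, hs, add_assoc]

lemma flatten_take_realize (M : List (List ℤ)) :
    ∀ (i m : ℕ), m ≤ (M.getD i []).length →
      ∃ k, (M.flatten.take k).sum = ((M.take i).flatten).sum + ((M.getD i []).take m).sum := by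
  induction M with
  | nil => intro i m hm; simp at hm; exact ⟨0, by simp [hm]⟩
  | cons L M' ih =>
    intro i m hm
    cases i with
    | zero =>
      refine ⟨m, ?_⟩
      simp only [List.getD] at hm ⊢
      simp [List.flatten_cons, List.take_append_of_le_length (by simpa using hm)]
    | succ i =>
      obtain ⟨k, hk⟩ := ih i m (by simpa using hm)
      refine ⟨L.length + k, ?_⟩
      simp [List.flatten_cons, List.take_append, List.take_of_length_le, hk, add_assoc]

lemma sum_map_range (h : ℕ → ℤ) (N : ℕ) :
    ((List.range N).map h).sum = ∑ r ∈ Finset.range N, h r := by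
  induction N with
  | zero => simp
  | succ N ih => rw [List.range_succ, Finset.sum_range_succ]; simp [ih]

lemma reverse_range_take_sum (h : ℕ → ℤ) :
    ∀ (i N : ℕ), i ≤ N →
      ((((List.range N).reverse.map h).take i)).sum = ∑ c ∈ Finset.Ico (N - i) N, h c := by
  intro i
  induction i with
  | zero => intro N _; simp
  | succ i ih =>
    intro N hN
    obtain ⟨N', rfl⟩ : ∃ N', N = N' + 1 := ⟨N - 1, by omega⟩
    rw [List.range_succ]
    simp only [List.reverse_append, List.reverse_cons, List.reverse_nil, List.nil_append,
      List.cons_append, List.map_cons, List.take_succ_cons, List.sum_cons]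
    rw [ih N' (by omega)]
    rw [show N' + 1 - (i + 1) = N' - i by omega]
    rw [Finset.sum_Ico_succ_top (by omega)]
    ring

lemma reverse_range_getD (N i : ℕ) (hi : i < N) :
    ((List.range N).reverse)[i]? = some (N - 1 - i) := by
  rw [List.getElem?_reverse (by simpa using hi)]
  simp only [List.length_range]
  exact List.getElem?_range (by omega)

/-! ### Basic tableau facts -/

section Tableau

variable {n : ℕ} (T : SSYT n)

lemma rowLen_anti : Antitone T.rowLen := antitone_nat_of_succ_le T.shape_antitone

lemma entry_eq_none {r c : ℕ} (h : ¬ c < T.rowLen r) : T.entry r c = none := by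
  have h2 := T.entry_isSome_iff r c
  rcases he : T.entry r c with _ | l
  · rfl
  · exact absurd (h2.1 (by simp [he])) h

lemma lt_rowLen_of_some {r c : ℕ} {l : Letter n} (h : T.entry r c = some l) :
    c < T.rowLen r := (T.entry_isSome_iff r c).1 (by simp [h])

lemma row_lt_of_some {r c : ℕ} {l : Letter n} (h : T.entry r c = some l) : r < 2 * n := by
  by_contra hr
  have := T.rows_bounded r (by omega)
  have := lt_rowLen_of_some T h
  omega

lemma rowLen_le_first (r : ℕ) : T.rowLen r ≤ T.rowLen 0 := rowLen_anti T (Nat.zero_le r)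

lemma box_above {r s c : ℕ} {l : Letter n} (h : T.entry s c = some l) (hrs : r ≤ s) :
    ∃ l', T.entry r c = some l' := by
  have hc : c < T.rowLen r := lt_of_lt_of_le (lt_rowLen_of_some T h) (rowLen_anti T hrs)
  rcases he : T.entry r c with _ | l'
  · have := (T.entry_isSome_iff r c).2 hc
    simp [he] at this
  · exact ⟨l', rfl⟩

lemma count_ne_zero {r c : ℕ} {l : Letter n} (h : T.entry r c = some l) :
    T.count l r ≠ 0 := by
  have hc : c < T.rowLen r := lt_rowLen_of_some T h
  unfold SSYT.count
  intro hlen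
  rw [List.length_eq_zero_iff] at hlen
  have : c ∈ (List.range (T.rowLen r)).filter fun c => T.entry r c = some l := by
    simp [List.mem_filter, List.mem_range, hc, h]
  rw [hlen] at this
  simp at this

lemma idx_lt_two_n {l : Letter n} : l.idx < 2 * n := by
  rcases l with i | i
  · have := i.isLt; simp only [Letter.idx]; omega
  · have := i.isLt; simp only [Letter.idx]; omega

lemma idx_cases (hT : RowRestriction T) {r c : ℕ} {l : Letter n}
    (h : T.entry r c = some l) :
    l.idx = r ∨ (n ≤ l.idx ∧ 2 * n - r ≤ l.idx ∧ l.idx < 2 * n) := by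
  rcases hT r l (count_ne_zero T h) with ⟨hr, rfl⟩ | ⟨k, hk, rfl⟩
  · left; simp [Letter.idx]
  · right
    have := k.isLt
    simp only [Letter.idx]
    omega

lemma idx_row_of_lt (hT : RowRestriction T) {r c : ℕ} {l : Letter n}
    (h : T.entry r c = some l) (hl : l.idx < n) : l.idx = r := by
  rcases idx_cases T hT h with h1 | h2
  · exact h1
  · omega

end Tableau

/-! ### The quantity `d` and its sums -/

section DSums

variable {n : ℕ} (T : SSYT n) (j : ℕ)

/-- `d(l) = wt l j - wt l (j+1)`. -/
def dd (l : Letter n) : ℤ := wt l j - wt l (j + 1)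

end DSums

/-- `d` as a function of the position `idx` in the order (valid for `j < n`). -/
def did (n j : ℕ) (e : ℕ) : ℤ :=
  if e = j ∨ e = 2 * n - 2 - j then 1
  else if e = j + 1 ∨ e = 2 * n - 1 - j then -1
  else 0

section DSums2

variable {n : ℕ} (T : SSYT n) (j : ℕ)

lemma dd_eq_did (hj : j < n) (l : Letter n) : dd j l = did n j l.idx := by
  rcases l with i | i <;>
  · have := i.isLt
    simp only [dd, wt, did, Letter.idx]
    split_ifs <;> omega

lemma dd_zero_of_ge (hj : n ≤ j) (l : Letter n) : dd j l = 0 := by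
  rcases l with i | i <;>
  · have := i.isLt
    simp only [dd, wt]
    split_ifs <;> omega

/-- The value of `d` at box `(r,c)` (0 if there is no box). -/
def dE (r c : ℕ) : ℤ := ((T.entry r c).map (dd j)).getD 0

lemma dE_of_some {r c : ℕ} {l : Letter n} (h : T.entry r c = some l) :
    dE T j r c = dd j l := by simp [dE, h]

lemma dE_of_none {r c : ℕ} (h : ¬ c < T.rowLen r) : dE T j r c = 0 := by
  simp [dE, entry_eq_none T h]

def colPart (c ρ : ℕ) : ℤ := ∑ r ∈ Finset.range ρ, dE T j r c

def Gg (c : ℕ) : ℤ := ∑ c' ∈ Finset.Ico c (T.rowLen 0), colPart T j c' (2 * n)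

def rowDfrom (r c : ℕ) : ℤ := ∑ c' ∈ Finset.Ico c (T.rowLen 0), dE T j r c'

def Arow (r : ℕ) : ℤ := ∑ s ∈ Finset.range r, rowDfrom T j s 0

/-- Condition equivalent to dominance of `w(T)` at coordinate `j`. -/
def CW : Prop := ∀ c ρ, 0 ≤ Gg T j (c + 1) + colPart T j c ρ

/-- Condition equivalent to dominance of `w'(T)` at coordinate `j`. -/
def CR : Prop := ∀ r c, 0 ≤ Arow T j r + rowDfrom T j r c

/-- There is a barred letter `j-bar` at `(r,c)`. -/
def M2at (r c : ℕ) : Prop := ∃ l : Letter n, T.entry r c = some l ∧ l.idx = 2 * n - 1 - j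

/-- There is a letter of index `j+1` at `(r,c)`. -/
def M1at (r c : ℕ) : Prop := ∃ l : Letter n, T.entry r c = some l ∧ l.idx = j + 1

end DSums2

/-! ### Classification of `did` values -/

section DidLemmas

variable {n j e : ℕ}

lemma did_eq_zero (h1 : e ≠ j) (h2 : e ≠ 2 * n - 2 - j) (h3 : e ≠ j + 1)
    (h4 : e ≠ 2 * n - 1 - j) : did n j e = 0 := by
  unfold did; split_ifs <;> omega

lemma did_eq_neg (hj : j < n) (h : e = j + 1 ∨ e = 2 * n - 1 - j) : did n j e = -1 := by
  unfold did; split_ifs <;> omega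

lemma did_eq_pos (h : e = j ∨ e = 2 * n - 2 - j) : did n j e = 1 := by
  unfold did; split_ifs <;> omega

lemma did_neg_cases (h : did n j e = -1) : e = j + 1 ∨ e = 2 * n - 1 - j := by
  unfold did at h; split_ifs at h <;> omega

lemma did_pos_cases (h : did n j e = 1) : e = j ∨ e = 2 * n - 2 - j := by
  unfold did at h; split_ifs at h <;> omega

end DidLemmas

section Classify

variable {n : ℕ} (T : SSYT n) (j : ℕ)

lemma neg_one_le_dd (l : Letter n) : -1 ≤ dd j l := by
  rcases l with i | i <;> · simp only [dd, wt]; split_ifs <;> omega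

lemma dd_le_one (l : Letter n) : dd j l ≤ 1 := by
  rcases l with i | i <;> · simp only [dd, wt]; split_ifs <;> omega

lemma neg_one_le_dE (r c : ℕ) : -1 ≤ dE T j r c := by
  rcases he : T.entry r c with _ | l
  · simp [dE, he]
  · rw [dE_of_some T j he]; exact neg_one_le_dd j l

lemma dE_le_one (r c : ℕ) : dE T j r c ≤ 1 := by
  rcases he : T.entry r c with _ | l
  · simp [dE, he]
  · rw [dE_of_some T j he]; exact dd_le_one j l

lemma dE_eq_did_of_some (hj : j < n) {r c : ℕ} {l : Letter n}
    (h : T.entry r c = some l) : dE T j r c = did n j l.idx := by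
  rw [dE_of_some T j h, dd_eq_did j hj]

variable (hT : RowRestriction T) (hj : j < n)
include hT hj

lemma dE_row_lt {s c : ℕ} (hs : s < j) : dE T j s c = 0 := by
  rcases he : T.entry s c with _ | l
  · simp [dE, he]
  · rw [dE_eq_did_of_some T j hj he]
    have hc := idx_cases T hT he
    apply did_eq_zero <;> rcases hc with h | h <;> omega

lemma dE_row_j_nonneg (c : ℕ) : 0 ≤ dE T j j c := by
  rcases he : T.entry j c with _ | l
  · simp [dE, he]
  · rw [dE_eq_did_of_some T j hj he]
    rcases idx_cases T hT he with h | h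
    · rw [did_eq_pos (Or.inl h)]; norm_num
    · rw [did_eq_zero] <;> omega

lemma dE_row_j1_nonpos (c : ℕ) : dE T j (j + 1) c ≤ 0 := by
  rcases he : T.entry (j + 1) c with _ | l
  · simp [dE, he]
  · rw [dE_eq_did_of_some T j hj he]
    by_cases h1 : l.idx = j + 1 ∨ l.idx = 2 * n - 1 - j
    · rw [did_eq_neg hj h1]; norm_num
    · push_neg at h1
      rcases idx_cases T hT he with h | h
      · omega
      · rw [did_eq_zero] <;> omega

omit hT

lemma dE_zero_of_idx_gt {r c : ℕ} {l : Letter n} (h : T.entry r c = some l)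
    (hgt : 2 * n - 1 - j < l.idx) : dE T j r c = 0 := by
  rw [dE_eq_did_of_some T j hj h]
  apply did_eq_zero <;> omega

lemma dE_neg_cases {r c : ℕ} (h : dE T j r c = -1) :
    ∃ l : Letter n, T.entry r c = some l ∧ (l.idx = j + 1 ∨ l.idx = 2 * n - 1 - j) := by
  rcases he : T.entry r c with _ | l
  · rw [dE, he] at h; simp at h
  · rw [dE_eq_did_of_some T j hj he] at h
    exact ⟨l, rfl, did_neg_cases h⟩

lemma dE_of_M2at {r c : ℕ} (h : M2at T j r c) : dE T j r c = -1 := by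
  obtain ⟨l, he, hl⟩ := h
  rw [dE_eq_did_of_some T j hj he]
  exact did_eq_neg hj (Or.inr hl)

lemma dE_neg_or (r c : ℕ) : 0 ≤ dE T j r c ∨ dE T j r c = -1 := by
  have h1 := neg_one_le_dE T j r c
  omega

include hT

lemma dE_P1 {c : ℕ} {l : Letter n} (h : T.entry (j + 1) c = some l)
    (hl : l.idx = j + 1) : dE T j j c = 1 := by
  obtain ⟨l', he'⟩ := box_above T h (Nat.le_succ j)
  have hlt : l'.idx < l.idx := T.cols_strict j (j + 1) c l' l (Nat.lt_succ_self j) he' h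
  have : l'.idx = j := idx_row_of_lt T hT he' (by omega)
  rw [dE_eq_did_of_some T j hj he']
  exact did_eq_pos (Or.inl this)

lemma M1_row {r c : ℕ} (h : M1at T j r c) (hjn : j + 1 < n) : r = j + 1 := by
  obtain ⟨l, he, hl⟩ := h
  have := idx_row_of_lt T hT he (by omega)
  omega

end Classify

/-! ### Column lemma L1 and row lemma L2 -/

section RowCol

variable {n : ℕ} (T : SSYT n) (j : ℕ) (hT : RowRestriction T) (hj : j < n)
include hT hj

lemma L1b (c ρ : ℕ) (hM2 : ∀ s, s < ρ → ¬ M2at T j s c) : 0 ≤ colPart T j c ρ := by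
  classical
  by_cases hM1 : ∃ s, s < ρ ∧ M1at T j s c
  · obtain ⟨s₀, hs₀, l, hel, hil⟩ := hM1
    have hjn : j + 1 < n := by
      by_contra hc
      exact hM2 s₀ hs₀ ⟨l, hel, by omega⟩
    have hs0 : s₀ = j + 1 := by
      have := idx_row_of_lt T hT hel (by omega); omega
    subst hs0
    have hP1 : dE T j j c = 1 := dE_P1 T j hT hj hel hil
    have hj1mem : j + 1 ∈ Finset.range ρ := by simp; omega
    have hjmem : j ∈ (Finset.range ρ).erase (j + 1) := by
      simp [Finset.mem_erase]; omega
    have e1 := Finset.sum_erase_add (Finset.range ρ) (fun r => dE T j r c) hj1mem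
    have e2 := Finset.sum_erase_add ((Finset.range ρ).erase (j + 1))
      (fun r => dE T j r c) hjmem
    have hrest : 0 ≤ ∑ r ∈ (((Finset.range ρ).erase (j + 1)).erase j),
        dE T j r c := by
      apply Finset.sum_nonneg
      intro s hs
      simp only [Finset.mem_erase, Finset.mem_range] at hs
      rcases dE_neg_or T j hj s c with h | h
      · exact h
      · exfalso
        obtain ⟨l', he', hl'⟩ := dE_neg_cases T j hj h
        rcases hl' with hl' | hl'
        · have := idx_row_of_lt T hT he' (by omega); omega
        · exact hM2 s hs.2.2 ⟨l', he', hl'⟩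
    have hj1 := neg_one_le_dE T j (j + 1) c
    unfold colPart
    linarith
  · push_neg at hM1
    apply Finset.sum_nonneg
    intro s hs
    simp only [Finset.mem_range] at hs
    rcases dE_neg_or T j hj s c with h | h
    · exact h
    · exfalso
      obtain ⟨l', he', hl'⟩ := dE_neg_cases T j hj h
      rcases hl' with hl' | hl'
      · exact hM1 s hs ⟨l', he', hl'⟩
      · exact hM2 s hs ⟨l', he', hl'⟩

omit hT hj in
lemma colPart_cap (c ρ : ℕ) : colPart T j c ρ = colPart T j c (min ρ (2 * n)) := by
  rcases le_or_gt ρ (2 * n) with h | h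
  · rw [Nat.min_eq_left h]
  · rw [Nat.min_eq_right (le_of_lt h)]
    unfold colPart
    refine (Finset.sum_subset ?_ ?_).symm
    · intro x hx; simp at hx ⊢; omega
    · intro x _ hx
      simp only [Finset.mem_range, not_lt] at hx
      exact dE_of_none T j (by rw [T.rows_bounded x hx]; omega)

lemma L1 (c ρ : ℕ) : min 0 (colPart T j c (2 * n)) ≤ colPart T j c ρ := by
  rw [colPart_cap T j c ρ]
  set ρ' := min ρ (2 * n) with hρ'
  have hρ2 : ρ' ≤ 2 * n := min_le_right _ _
  by_cases hM : ∃ s, s < ρ' ∧ M2at T j s c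
  · obtain ⟨s₀, hs₀, l₀, he₀, hi₀⟩ := hM
    have : colPart T j c (2 * n) = colPart T j c ρ' := by
      unfold colPart
      refine (Finset.sum_subset ?_ ?_).symm
      · intro x hx; simp at hx ⊢; omega
      · intro x hx1 hx2
        simp only [Finset.mem_range, not_lt] at hx1 hx2
        rcases he : T.entry x c with _ | l
        · simp [dE, he]
        · have := T.cols_strict s₀ x c l₀ l (by omega) he₀ he
          exact dE_zero_of_idx_gt T j hj he (by omega)
    rw [← this]
    exact min_le_right _ _
  · push_neg at hM
    exact le_trans (min_le_left _ _) (L1b T j hT hj c ρ' hM)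

omit hT

lemma squeeze_le {r c₂ c : ℕ} (hc : c₂ ≤ c) {l₂ l : Letter n}
    (h₂ : T.entry r c₂ = some l₂) (h : T.entry r c = some l) (heq : l₂.idx = l.idx)
    (hneg : did n j l.idx = -1) : rowDfrom T j r c₂ ≤ rowDfrom T j r c := by
  have hcL : c < T.rowLen r := lt_rowLen_of_some T h
  have hcL0 : c ≤ T.rowLen 0 := le_of_lt (lt_of_lt_of_le hcL (rowLen_le_first T r))
  have hsplit := Finset.sum_Ico_consecutive (fun c' => dE T j r c') hc hcL0
  have hle : ∑ c' ∈ Finset.Ico c₂ c, dE T j r c' ≤ 0 := by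
    apply Finset.sum_nonpos
    intro c'' hc''
    simp only [Finset.mem_Ico] at hc''
    have hbox : c'' < T.rowLen r := by omega
    rcases he'' : T.entry r c'' with _ | l''
    · simp [dE, he'']
    · have h1 : l₂.idx ≤ l''.idx := T.rows_weak r c₂ c'' l₂ l'' hc''.1 h₂ he''
      have h2 : l''.idx ≤ l.idx := T.rows_weak r c'' c l'' l (le_of_lt hc''.2) he'' h
      rw [dE_eq_did_of_some T j hj he'', show l''.idx = l.idx by omega, hneg]
      norm_num
  unfold rowDfrom
  rw [← hsplit]
  linarith

lemma L2 (r c : ℕ) : 0 ≤ rowDfrom T j r c ∨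
    ∃ c', rowDfrom T j r c' ≤ rowDfrom T j r c ∧
      ((M2at T j r c' ∧ ∀ c'' < c', ¬ M2at T j r c'') ∨
       (M1at T j r c' ∧ ∀ c'' < c', ¬ M1at T j r c'')) := by
  classical
  suffices H : ∀ k c, T.rowLen 0 - c ≤ k → (0 ≤ rowDfrom T j r c ∨
    ∃ c', rowDfrom T j r c' ≤ rowDfrom T j r c ∧
      ((M2at T j r c' ∧ ∀ c'' < c', ¬ M2at T j r c'') ∨
       (M1at T j r c' ∧ ∀ c'' < c', ¬ M1at T j r c''))) by
    exact H (T.rowLen 0) c (by omega)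
  intro k
  induction k with
  | zero =>
    intro c hc
    left
    unfold rowDfrom
    rw [Finset.Ico_eq_empty (by omega)]
    simp
  | succ k ih =>
    intro c hc
    rcases le_or_gt (T.rowLen 0) c with hcL | hcL
    · left
      unfold rowDfrom
      rw [Finset.Ico_eq_empty (by omega)]
      simp
    have hsplit : rowDfrom T j r c = dE T j r c + rowDfrom T j r (c + 1) := by
      unfold rowDfrom
      exact Finset.sum_eq_sum_Ico_succ_bot hcL _
    rcases dE_neg_or T j hj r c with hd | hd
    · rcases ih (c + 1) (by omega) with h | ⟨c', hle, hp⟩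
      · left; omega
      · right; exact ⟨c', by omega, hp⟩
    · obtain ⟨l, he, hl⟩ := dE_neg_cases T j hj hd
      by_cases h2 : l.idx = 2 * n - 1 - j
      · have hex : ∃ x, M2at T j r x := ⟨c, l, he, h2⟩
        have hspec := Nat.find_spec hex
        obtain ⟨l₂, he₂, hl₂⟩ := hspec
        right
        refine ⟨Nat.find hex, ?_, Or.inl ⟨⟨l₂, he₂, hl₂⟩, fun c'' h'' => Nat.find_min hex h''⟩⟩
        exact squeeze_le T j hj (Nat.find_min' hex ⟨l, he, h2⟩) he₂ he (by omega)
          (by rw [h2]; exact did_eq_neg hj (Or.inr rfl))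
      · have h1 : l.idx = j + 1 := by rcases hl with hl | hl <;> omega
        have hex : ∃ x, M1at T j r x := ⟨c, l, he, h1⟩
        have hspec := Nat.find_spec hex
        obtain ⟨l₂, he₂, hl₂⟩ := hspec
        right
        refine ⟨Nat.find hex, ?_, Or.inr ⟨⟨l₂, he₂, hl₂⟩, fun c'' h'' => Nat.find_min hex h''⟩⟩
        exact squeeze_le T j hj (Nat.find_min' hex ⟨l, he, h1⟩) he₂ he (by omega)
          (by rw [h1]; exact did_eq_neg hj (Or.inl rfl))

end RowCol

/-! ### Splitting helpers -/

section Splits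

variable {n : ℕ} (T : SSYT n) (j : ℕ)

lemma sum_range_split (f : ℕ → ℤ) {r N : ℕ} (h : r < N) :
    ∑ s ∈ Finset.range N, f s =
      ((∑ s ∈ Finset.range r, f s) + f r) + ∑ s ∈ Finset.Ico (r + 1) N, f s := by
  rw [Finset.range_eq_Ico, ← Finset.sum_Ico_consecutive f (Nat.zero_le r) h.le,
    Finset.sum_eq_sum_Ico_succ_bot h, ← Finset.range_eq_Ico]
  ring

lemma Gg_eq_sum_rows (c : ℕ) :
    Gg T j c = ∑ s ∈ Finset.range (2 * n), rowDfrom T j s c := by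
  unfold Gg colPart rowDfrom
  exact Finset.sum_comm

lemma rowDfrom_split {a b : ℕ} (hab : a ≤ b) (hb : b ≤ T.rowLen 0) (r : ℕ) :
    rowDfrom T j r a = (∑ c' ∈ Finset.Ico a b, dE T j r c') + rowDfrom T j r b :=
  (Finset.sum_Ico_consecutive _ hab hb).symm

lemma Arow_succ (r : ℕ) : Arow T j (r + 1) = Arow T j r + rowDfrom T j r 0 :=
  Finset.sum_range_succ _ r

lemma Arow_split {c : ℕ} (hc : c ≤ T.rowLen 0) (r' : ℕ) :
    Arow T j r' = (∑ s ∈ Finset.range r', rowDfrom T j s c)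
      + ∑ c' ∈ Finset.Ico 0 c, colPart T j c' r' := by
  unfold Arow
  have h1 : ∀ s, rowDfrom T j s 0 = (∑ c' ∈ Finset.Ico 0 c, dE T j s c') + rowDfrom T j s c :=
    fun s => rowDfrom_split T j (Nat.zero_le c) hc s
  simp_rw [h1]
  rw [Finset.sum_add_distrib, add_comm]
  congr 1
  rw [Finset.sum_comm]
  unfold colPart
  rfl

end Splits

/-! ### The core geometric lemmas -/

section Core

variable {n : ℕ} (T : SSYT n) (j : ℕ) (hT : RowRestriction T) (hj : j < n)
include hT hj

/-- Rows strictly below an `M2`-free zone contribute nonnegatively (used via `L1b`);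
here: bound `colPart c' r ≤ 1` when box `(r,c')` carries `j‾`. -/
lemma colPart_le_one {r c' : ℕ} (hrgt : j + 1 < r) {l' : Letter n}
    (he' : T.entry r c' = some l') (hle : l'.idx = 2 * n - 1 - j) :
    colPart T j c' r ≤ 1 := by
  classical
  have hjr : j ∈ Finset.range r := by simp; omega
  -- values of `dE` strictly above row `r` in this column
  have hstrict : ∀ s, s < r → ∀ ls : Letter n, T.entry s c' = some ls → ls.idx < 2 * n - 1 - j := by
    intro s hs ls hes
    have := T.cols_strict s r c' ls l' hs hes he'
    omega
  by_cases hP2 : ∃ s, s < r ∧ s ≠ j ∧ s ≠ j + 1 ∧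
      ∃ ls : Letter n, T.entry s c' = some ls ∧ ls.idx = 2 * n - 2 - j
  · obtain ⟨s₀, hs₀r, hs₀j, hs₀j1, ls, hes, his⟩ := hP2
    have hs₀gt : j + 1 < s₀ := by
      rcases idx_cases T hT hes with h | h <;> omega
    -- dE (j+1) c' = -1
    obtain ⟨l₁, he₁⟩ := box_above T (r := j + 1) he' (by omega)
    have hl₁lt : l₁.idx < 2 * n - 2 - j := by
      have := T.cols_strict (j + 1) s₀ c' l₁ ls hs₀gt he₁ hes
      omega
    have hl₁ : l₁.idx = j + 1 := by
      rcases idx_cases T hT he₁ with h | h <;> omega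
    have hdj1 : dE T j (j + 1) c' = -1 := by
      rw [dE_eq_did_of_some T j hj he₁]
      exact did_eq_neg hj (Or.inl hl₁)
    have hds₀ : dE T j s₀ c' ≤ 1 := dE_le_one T j s₀ c'
    have hdj : dE T j j c' ≤ 1 := dE_le_one T j j c'
    have hj1mem : j + 1 ∈ Finset.range r := by simp; omega
    have hjmem : j ∈ (Finset.range r).erase (j + 1) := by simp [Finset.mem_erase]; omega
    have hs₀mem : s₀ ∈ ((Finset.range r).erase (j + 1)).erase j := by
      simp [Finset.mem_erase]; omega
    have e1 := Finset.sum_erase_add (Finset.range r) (fun s => dE T j s c') hj1mem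
    have e2 := Finset.sum_erase_add ((Finset.range r).erase (j + 1))
      (fun s => dE T j s c') hjmem
    have e3 := Finset.sum_erase_add (((Finset.range r).erase (j + 1)).erase j)
      (fun s => dE T j s c') hs₀mem
    have hrest : ∑ s ∈ ((((Finset.range r).erase (j + 1)).erase j).erase s₀),
        dE T j s c' ≤ 0 := by
      apply Finset.sum_nonpos
      intro s hs
      simp only [Finset.mem_erase, Finset.mem_range] at hs
      obtain ⟨hsns₀, hsnj, hsnj1, hsr⟩ := hs
      by_contra hpos
      push_neg at hpos
      have h1 : dE T j s c' = 1 := by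
        have := dE_le_one T j s c'; omega
      obtain ⟨lx, hex, hix⟩ : ∃ lx : Letter n, T.entry s c' = some lx ∧
          (lx.idx = j ∨ lx.idx = 2 * n - 2 - j) := by
        rcases hex : T.entry s c' with _ | lx
        · rw [dE, hex] at h1; simp at h1
        · rw [dE_eq_did_of_some T j hj hex] at h1
          exact ⟨lx, rfl, did_pos_cases h1⟩
      rcases hix with hix | hix
      · exact hsnj (by rw [← hix]; exact (idx_row_of_lt T hT hex (by omega)).symm ▸ rfl)
      · -- uniqueness of idx `2n-2-j` in a column
        rcases Nat.lt_trichotomy s s₀ with hlt | heq | hgt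
        · have := T.cols_strict s s₀ c' lx ls hlt hex hes; omega
        · exact hsns₀ heq
        · have := T.cols_strict s₀ s c' ls lx hgt hes hex; omega
    unfold colPart
    linarith
  · push_neg at hP2
    have hj1' : dE T j (j + 1) c' ≤ 0 := dE_row_j1_nonpos T j hT hj c'
    have hdj : dE T j j c' ≤ 1 := dE_le_one T j j c'
    have e2 := Finset.sum_erase_add (Finset.range r) (fun s => dE T j s c') hjr
    have hrest : ∑ s ∈ ((Finset.range r).erase j), dE T j s c' ≤ 0 := by
      apply Finset.sum_nonpos
      intro s hs
      simp only [Finset.mem_erase, Finset.mem_range] at hs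
      obtain ⟨hsnj, hsr⟩ := hs
      rcases eq_or_ne s (j + 1) with rfl | hsnj1
      · exact dE_row_j1_nonpos T j hT hj c'
      by_contra hpos
      push_neg at hpos
      have h1 : dE T j s c' = 1 := by have := dE_le_one T j s c'; omega
      obtain ⟨lx, hex, hix⟩ : ∃ lx : Letter n, T.entry s c' = some lx ∧
          (lx.idx = j ∨ lx.idx = 2 * n - 2 - j) := by
        rcases hex : T.entry s c' with _ | lx
        · rw [dE, hex] at h1; simp at h1
        · rw [dE_eq_did_of_some T j hj hex] at h1
          exact ⟨lx, rfl, did_pos_cases h1⟩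
      rcases hix with hix | hix
      · have := idx_row_of_lt T hT hex (by omega); omega
      · exact hP2 s hsr hsnj hsnj1 lx hex hix
    unfold colPart
    linarith

/-- Bound `colPart c' r ≤ 0` when the box `(r,c')` carries a letter strictly below `j‾`. -/
lemma colPart_le_zero {r c' : ℕ} (hrgt : j + 1 < r) {l' : Letter n}
    (he' : T.entry r c' = some l') (hle : l'.idx < 2 * n - 1 - j) :
    colPart T j c' r ≤ 0 := by
  classical
  -- dE (j+1) c' = -1
  obtain ⟨l₁, he₁⟩ := box_above T (r := j + 1) he' (by omega)
  have hl₁lt : l₁.idx < 2 * n - 1 - j := by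
    have := T.cols_strict (j + 1) r c' l₁ l' hrgt he₁ he'
    omega
  have hl₁ : l₁.idx = j + 1 := by
    rcases idx_cases T hT he₁ with h | h <;> omega
  have hdj1 : dE T j (j + 1) c' = -1 := by
    rw [dE_eq_did_of_some T j hj he₁]
    exact did_eq_neg hj (Or.inl hl₁)
  have hdj : dE T j j c' ≤ 1 := dE_le_one T j j c'
  have hj1mem : j + 1 ∈ Finset.range r := by simp; omega
  have hjmem : j ∈ (Finset.range r).erase (j + 1) := by simp [Finset.mem_erase]; omega
  have e1 := Finset.sum_erase_add (Finset.range r) (fun s => dE T j s c') hj1mem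
  have e2 := Finset.sum_erase_add ((Finset.range r).erase (j + 1))
    (fun s => dE T j s c') hjmem
  have hrest : ∑ s ∈ (((Finset.range r).erase (j + 1)).erase j), dE T j s c' ≤ 0 := by
    apply Finset.sum_nonpos
    intro s hs
    simp only [Finset.mem_erase, Finset.mem_range] at hs
    obtain ⟨hsnj, hsnj1, hsr⟩ := hs
    by_contra hpos
    push_neg at hpos
    have h1 : dE T j s c' = 1 := by have := dE_le_one T j s c'; omega
    obtain ⟨lx, hex, hix⟩ : ∃ lx : Letter n, T.entry s c' = some lx ∧
        (lx.idx = j ∨ lx.idx = 2 * n - 2 - j) := by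
      rcases hex : T.entry s c' with _ | lx
      · rw [dE, hex] at h1; simp at h1
      · rw [dE_eq_did_of_some T j hj hex] at h1
        exact ⟨lx, rfl, did_pos_cases h1⟩
    rcases hix with hix | hix
    · have := idx_row_of_lt T hT hex (by omega); omega
    · -- a `(j+1)-bar` strictly above `(r,c')` forces idx l' between, contradiction
      have := T.cols_strict s r c' lx l' hsr hex he'
      omega
  unfold colPart
  linarith

end Core

section Core2

variable {n : ℕ} (T : SSYT n) (j : ℕ) (hT : RowRestriction T) (hj : j < n)
include hT hj

lemma O2 (hG : ∀ c, 0 ≤ Gg T j c) {r c₂ : ℕ} {l₂ : Letter n}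
    (he₂ : T.entry r c₂ = some l₂) (hi₂ : l₂.idx = 2 * n - 1 - j)
    (hmin : ∀ c'' < c₂, ¬ M2at T j r c'') : 0 ≤ Arow T j r + rowDfrom T j r c₂ := by
  have hr2n : r < 2 * n := row_lt_of_some T he₂
  have hc₂len : c₂ < T.rowLen r := lt_rowLen_of_some T he₂
  have hc₂L0 : c₂ ≤ T.rowLen 0 := le_of_lt (lt_of_lt_of_le hc₂len (rowLen_le_first T r))
  refine le_trans (hG c₂) ?_
  rw [Gg_eq_sum_rows, sum_range_split _ hr2n]
  have hTail : ∑ s ∈ Finset.Ico (r + 1) (2 * n), rowDfrom T j s c₂ = 0 := by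
    apply Finset.sum_eq_zero
    intro s hs
    simp only [Finset.mem_Ico] at hs
    unfold rowDfrom
    apply Finset.sum_eq_zero
    intro c' hc'
    simp only [Finset.mem_Ico] at hc'
    rcases hes : T.entry s c' with _ | l
    · simp [dE, hes]
    · obtain ⟨lr, her⟩ := box_above T (r := r) hes (by omega)
      have h1 : l₂.idx ≤ lr.idx := T.rows_weak r c₂ c' l₂ lr hc'.1 he₂ her
      have h2 : lr.idx < l.idx := T.cols_strict r s c' lr l (by omega) her hes
      exact dE_zero_of_idx_gt T j hj hes (by omega)
  have hLeft : 0 ≤ ∑ c' ∈ Finset.Ico 0 c₂, colPart T j c' r := by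
    apply Finset.sum_nonneg
    intro c' hc'
    simp only [Finset.mem_Ico] at hc'
    apply L1b T j hT hj
    rintro s hs ⟨l', he', hi'⟩
    obtain ⟨lr, her⟩ : ∃ lr : Letter n, T.entry r c' = some lr := by
      rcases her : T.entry r c' with _ | lr
      · exfalso
        have := (T.entry_isSome_iff r c').2 (by omega)
        simp [her] at this
      · exact ⟨lr, rfl⟩
    have h1 : l'.idx < lr.idx := T.cols_strict s r c' l' lr hs he' her
    have h2 : lr.idx ≤ l₂.idx := T.rows_weak r c' c₂ lr l₂ (le_of_lt hc'.2) her he₂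
    omega
  have hA := Arow_split T j hc₂L0 r
  linarith

lemma O3 (hG : ∀ c, 0 ≤ Gg T j c) : 0 ≤ Arow T j (j + 2) := by
  classical
  by_cases hM2 : ∃ x, M2at T j (j + 1) x
  · obtain ⟨l₀, he₀, hi₀⟩ := Nat.find_spec hM2
    have hr2n : j + 1 < 2 * n := row_lt_of_some T he₀
    have hc₀len : Nat.find hM2 < T.rowLen (j + 1) := lt_rowLen_of_some T he₀
    have hc₀L0 : Nat.find hM2 ≤ T.rowLen 0 :=
      le_of_lt (lt_of_lt_of_le hc₀len (rowLen_le_first T _))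
    refine le_trans (hG (Nat.find hM2)) ?_
    rw [Gg_eq_sum_rows]
    have hsplit : ∑ s ∈ Finset.range (2 * n), rowDfrom T j s (Nat.find hM2) =
        (∑ s ∈ Finset.range (j + 2), rowDfrom T j s (Nat.find hM2))
        + ∑ s ∈ Finset.Ico (j + 2) (2 * n), rowDfrom T j s (Nat.find hM2) := by
      simp only [Finset.range_eq_Ico]
      exact (Finset.sum_Ico_consecutive _ (by omega) (by omega)).symm
    have hTail : ∑ s ∈ Finset.Ico (j + 2) (2 * n), rowDfrom T j s (Nat.find hM2) = 0 := by
      apply Finset.sum_eq_zero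
      intro s hs
      simp only [Finset.mem_Ico] at hs
      unfold rowDfrom
      apply Finset.sum_eq_zero
      intro c' hc'
      simp only [Finset.mem_Ico] at hc'
      rcases hes : T.entry s c' with _ | l
      · simp [dE, hes]
      · obtain ⟨lr, her⟩ := box_above T (r := j + 1) hes (by omega)
        have h1 : l₀.idx ≤ lr.idx := T.rows_weak (j + 1) _ c' l₀ lr hc'.1 he₀ her
        have h2 : lr.idx < l.idx := T.cols_strict (j + 1) s c' lr l (by omega) her hes
        exact dE_zero_of_idx_gt T j hj hes (by omega)
    have hLeft : 0 ≤ ∑ c' ∈ Finset.Ico 0 (Nat.find hM2), colPart T j c' (j + 2) := by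
      apply Finset.sum_nonneg
      intro c' hc'
      simp only [Finset.mem_Ico] at hc'
      rcases he₁ : T.entry (j + 1) c' with _ | l₁
      · exfalso
        have := (T.entry_isSome_iff (j + 1) c').2 (by omega)
        simp [he₁] at this
      have hw : l₁.idx ≤ l₀.idx := T.rows_weak (j + 1) c' _ l₁ l₀ (le_of_lt hc'.2) he₁ he₀
      have hi₁ : l₁.idx = j + 1 := by
        rcases idx_cases T hT he₁ with h | h
        · exact h
        · exfalso
          exact Nat.find_min hM2 hc'.2 ⟨l₁, he₁, by omega⟩
      have heq : colPart T j c' (j + 2) = ((∑ s ∈ Finset.range j, dE T j s c')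
          + dE T j j c') + dE T j (j + 1) c' := by
        unfold colPart
        rw [Finset.sum_range_succ, Finset.sum_range_succ]
      have hz : ∑ s ∈ Finset.range j, dE T j s c' = 0 :=
        Finset.sum_eq_zero fun s hs => dE_row_lt T j hT hj (by simp at hs; omega)
      have hP1 : dE T j j c' = 1 := dE_P1 T j hT hj he₁ hi₁
      have hm1 : dE T j (j + 1) c' = -1 := by
        rw [dE_eq_did_of_some T j hj he₁]
        exact did_eq_neg hj (Or.inl hi₁)
      rw [heq, hz, hP1, hm1]
      norm_num
    have hA := Arow_split T j hc₀L0 (j + 2)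
    linarith
  · push_neg at hM2
    have heq : Arow T j (j + 2) =
        ∑ c' ∈ Finset.Ico 0 (T.rowLen 0), (dE T j j c' + dE T j (j + 1) c') := by
      unfold Arow
      rw [Finset.sum_range_succ, Finset.sum_range_succ]
      have hz : ∑ s ∈ Finset.range j, rowDfrom T j s 0 = 0 := by
        apply Finset.sum_eq_zero
        intro s hs
        unfold rowDfrom
        exact Finset.sum_eq_zero fun c' _ => dE_row_lt T j hT hj (by simp at hs; omega)
      rw [hz, zero_add]
      unfold rowDfrom
      rw [← Finset.sum_add_distrib]
    rw [heq]
    apply Finset.sum_nonneg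
    intro c' _
    rcases dE_neg_or T j hj (j + 1) c' with h | h
    · have := dE_row_j_nonneg T j hT hj c'
      linarith
    · obtain ⟨l, he, hl⟩ := dE_neg_cases T j hj h
      rcases hl with hl | hl
      · have := dE_P1 T j hT hj he hl
        omega
      · exact absurd ⟨l, he, hl⟩ (hM2 c')

lemma mainG (hCR : CR T j) : ∀ c, 0 ≤ Gg T j c := by
  classical
  intro c
  by_cases hS : ∃ s c', c ≤ c' ∧ M2at T j s c'
  swap
  · push_neg at hS
    unfold Gg
    apply Finset.sum_nonneg
    intro c' hc'
    simp only [Finset.mem_Ico] at hc'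
    exact L1b T j hT hj c' (2 * n) (fun s _ hM => hS s c' hc'.1 hM)
  obtain ⟨r, ⟨c₀, hcc₀, l₀, he₀, hi₀⟩, hmax⟩ :
      ∃ r, (∃ c₀, c ≤ c₀ ∧ ∃ l₀ : Letter n, T.entry r c₀ = some l₀ ∧ l₀.idx = 2 * n - 1 - j) ∧
        (∀ s, r < s → ∀ c', c ≤ c' → ¬ M2at T j s c') := by
    obtain ⟨s₀, c₀', hcc₀', hM₀⟩ := hS
    set P : ℕ → Prop := fun s => ∃ c', c ≤ c' ∧ M2at T j s c' with hPdef
    have hs₀2n : s₀ < 2 * n := by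
      obtain ⟨l, he, _⟩ := hM₀
      exact row_lt_of_some T he
    have hPr : P (Nat.findGreatest P (2 * n)) :=
      Nat.findGreatest_spec (le_of_lt hs₀2n) ⟨c₀', hcc₀', hM₀⟩
    obtain ⟨c₀, hcc₀, l₀, he₀, hi₀⟩ := hPr
    refine ⟨Nat.findGreatest P (2 * n), ⟨c₀, hcc₀, l₀, he₀, hi₀⟩, ?_⟩
    intro s hs c' hc' hM
    obtain ⟨l, he, hi⟩ := hM
    have hs2n : s < 2 * n := row_lt_of_some T he
    exact Nat.findGreatest_is_greatest hs (le_of_lt hs2n) ⟨c', hc', l, he, hi⟩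
  have hr2n : r < 2 * n := row_lt_of_some T he₀
  have hc₀len : c₀ < T.rowLen r := lt_rowLen_of_some T he₀
  have hcL0 : c ≤ T.rowLen 0 := by
    have := rowLen_le_first T r
    omega
  have hrj1 : j + 1 ≤ r := by
    rcases idx_cases T hT he₀ with h | h <;> omega
  have hUp : ∀ s, r < s → 0 ≤ rowDfrom T j s c := by
    intro s hs
    unfold rowDfrom
    apply Finset.sum_nonneg
    intro c' hc'
    simp only [Finset.mem_Ico] at hc'
    rcases dE_neg_or T j hj s c' with h | h
    · exact h
    exfalso
    obtain ⟨l, he, hl⟩ := dE_neg_cases T j hj h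
    rcases hl with hl | hl
    · rcases Nat.lt_or_ge (j + 1) n with hn | hn
      · have := idx_row_of_lt T hT he (by omega)
        omega
      · exact hmax s hs c' hc'.1 ⟨l, he, by omega⟩
    · exact hmax s hs c' hc'.1 ⟨l, he, hl⟩
  rcases eq_or_lt_of_le hrj1 with hreq | hrgt
  · -- r = j + 1
    have hr : r = j + 1 := hreq.symm
    subst hr
    have h1 : 0 ≤ Arow T j (j + 2) := by
      rw [Arow_succ]
      exact hCR (j + 1) 0
    suffices hle : Arow T j (j + 2) ≤ Gg T j c by linarith
    rw [Gg_eq_sum_rows]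
    have hsplit : ∑ s ∈ Finset.range (2 * n), rowDfrom T j s c =
        (∑ s ∈ Finset.range (j + 2), rowDfrom T j s c)
        + ∑ s ∈ Finset.Ico (j + 2) (2 * n), rowDfrom T j s c := by
      simp only [Finset.range_eq_Ico]
      exact (Finset.sum_Ico_consecutive _ (by omega) (by omega)).symm
    have hTail : 0 ≤ ∑ s ∈ Finset.Ico (j + 2) (2 * n), rowDfrom T j s c :=
      Finset.sum_nonneg fun s hs => hUp s (by simp only [Finset.mem_Ico] at hs; omega)
    have hA := Arow_split T j hcL0 (j + 2)
    have hcols : ∑ c' ∈ Finset.Ico 0 c, colPart T j c' (j + 2) ≤ 0 := by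
      apply Finset.sum_nonpos
      intro c' hc'
      simp only [Finset.mem_Ico] at hc'
      rcases he₁ : T.entry (j + 1) c' with _ | l₁
      · exfalso
        have := (T.entry_isSome_iff (j + 1) c').2 (by omega)
        simp [he₁] at this
      have hw : l₁.idx ≤ l₀.idx := T.rows_weak (j + 1) c' c₀ l₁ l₀ (by omega) he₁ he₀
      have hm1 : dE T j (j + 1) c' = -1 := by
        rw [dE_eq_did_of_some T j hj he₁]
        apply did_eq_neg hj
        rcases idx_cases T hT he₁ with h | h <;> omega
      have heq : colPart T j c' (j + 2) = ((∑ s ∈ Finset.range j, dE T j s c')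
          + dE T j j c') + dE T j (j + 1) c' := by
        unfold colPart
        rw [Finset.sum_range_succ, Finset.sum_range_succ]
      have hz : ∑ s ∈ Finset.range j, dE T j s c' = 0 :=
        Finset.sum_eq_zero fun s hs => dE_row_lt T j hT hj (by simp at hs; omega)
      have := dE_le_one T j j c'
      rw [heq, hz, hm1]
      linarith
    linarith
  · -- r > j + 1
    have hex2 : ∃ x, M2at T j r x := ⟨c₀, l₀, he₀, hi₀⟩
    obtain ⟨l₂, he₂, hi₂⟩ := Nat.find_spec hex2
    have hc₂c₀ : Nat.find hex2 ≤ c₀ := Nat.find_min' hex2 ⟨l₀, he₀, hi₀⟩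
    set c₂ := Nat.find hex2 with hc₂def
    set cc := min c₂ c with hccdef
    have hccc : cc ≤ c := min_le_right _ _
    have h1 := hCR r cc
    suffices hle : Arow T j r + rowDfrom T j r cc ≤ Gg T j c by linarith
    rw [Gg_eq_sum_rows, sum_range_split _ hr2n]
    have hTail : 0 ≤ ∑ s ∈ Finset.Ico (r + 1) (2 * n), rowDfrom T j s c :=
      Finset.sum_nonneg fun s hs => hUp s (by simp only [Finset.mem_Ico] at hs; omega)
    have hA := Arow_split T j hcL0 r
    have hsplitr : rowDfrom T j r cc = (∑ c' ∈ Finset.Ico cc c, dE T j r c')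
        + rowDfrom T j r c := rowDfrom_split T j hccc hcL0 r
    have hbox : ∀ c', c' < c → ∃ l' : Letter n, T.entry r c' = some l' ∧ l'.idx ≤ 2 * n - 1 - j := by
      intro c' hc'
      rcases he' : T.entry r c' with _ | l'
      · exfalso
        have := (T.entry_isSome_iff r c').2 (by omega)
        simp [he'] at this
      refine ⟨l', rfl, ?_⟩
      have := T.rows_weak r c' c₀ l' l₀ (by omega) he' he₀
      omega
    have hCb : ∀ c' ∈ Finset.Ico cc c, colPart T j c' r + dE T j r c' ≤ 0 := by
      intro c' hc'
      simp only [Finset.mem_Ico] at hc'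
      obtain ⟨l', he', hle'⟩ := hbox c' hc'.2
      have hc₂c' : c₂ ≤ c' := by omega
      have hge : 2 * n - 1 - j ≤ l'.idx := by
        have := T.rows_weak r c₂ c' l₂ l' hc₂c' he₂ he'
        omega
      have heq' : l'.idx = 2 * n - 1 - j := by omega
      have hd : dE T j r c' = -1 := by
        rw [dE_eq_did_of_some T j hj he']
        exact did_eq_neg hj (Or.inr heq')
      have := colPart_le_one T j hT hj hrgt he' heq'
      linarith
    have hCa : ∀ c' ∈ Finset.Ico 0 cc, colPart T j c' r ≤ 0 := by
      intro c' hc'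
      simp only [Finset.mem_Ico] at hc'
      obtain ⟨l', he', hle'⟩ := hbox c' (by omega)
      have hlt' : l'.idx < 2 * n - 1 - j := by
        rcases eq_or_lt_of_le hle' with h | h
        · exfalso
          exact (Nat.find_min hex2 (show c' < c₂ by omega)) ⟨l', he', h⟩
        · exact h
      exact colPart_le_zero T j hT hj hrgt he' hlt'
    have hsum1 : ∑ c' ∈ Finset.Ico 0 c, colPart T j c' r =
        (∑ c' ∈ Finset.Ico 0 cc, colPart T j c' r)
        + ∑ c' ∈ Finset.Ico cc c, colPart T j c' r :=
      (Finset.sum_Ico_consecutive _ (Nat.zero_le cc) hccc).symm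
    have hb1 : ∑ c' ∈ Finset.Ico 0 cc, colPart T j c' r ≤ 0 := Finset.sum_nonpos hCa
    have hb2 : (∑ c' ∈ Finset.Ico cc c, colPart T j c' r)
        + (∑ c' ∈ Finset.Ico cc c, dE T j r c') ≤ 0 := by
      rw [← Finset.sum_add_distrib]
      exact Finset.sum_nonpos hCb
    linarith

end Core2

/-! ### The equivalence of `CW` and `CR` -/

section CoreEquiv

variable {n : ℕ} (T : SSYT n) (j : ℕ)

lemma Gg_succ {c : ℕ} (hc : c < T.rowLen 0) :
    Gg T j c = colPart T j c (2 * n) + Gg T j (c + 1) := by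
  unfold Gg
  exact Finset.sum_eq_sum_Ico_succ_bot hc _

lemma Gg_zero_of_ge {c : ℕ} (hc : T.rowLen 0 ≤ c) : Gg T j c = 0 := by
  unfold Gg
  rw [Finset.Ico_eq_empty (by omega)]
  simp

lemma colPart_zero_of_ge {c : ℕ} (hc : T.rowLen 0 ≤ c) (ρ : ℕ) : colPart T j c ρ = 0 :=
  Finset.sum_eq_zero fun s _ => dE_of_none T j (by have := rowLen_le_first T s; omega)

lemma hG_of_CW (hCW : CW T j) : ∀ c, 0 ≤ Gg T j c := by
  intro c
  rcases lt_or_ge c (T.rowLen 0) with hc | hc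
  · rw [Gg_succ T j hc]
    have := hCW c (2 * n)
    linarith
  · rw [Gg_zero_of_ge T j hc]

variable (hT : RowRestriction T) (hj : j < n)
include hT hj

lemma CW_of_CR (hCR : CR T j) : CW T j := by
  intro c ρ
  have hG := mainG T j hT hj hCR
  rcases lt_or_ge c (T.rowLen 0) with hc | hc
  · have hL1 := L1 T j hT hj c ρ
    have hGs := Gg_succ T j hc
    have h1 := hG c
    have h2 := hG (c + 1)
    rcases min_cases (0 : ℤ) (colPart T j c (2 * n)) with ⟨heq, _⟩ | ⟨heq, _⟩ <;>
      rw [heq] at hL1 <;> linarith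
  · rw [colPart_zero_of_ge T j (by omega), Gg_zero_of_ge T j (by omega)]
    norm_num

lemma CR_of_CW (hCW : CW T j) : CR T j := by
  have hG := hG_of_CW T j hCW
  have key : ∀ r, 0 ≤ Arow T j r → ∀ c, 0 ≤ Arow T j r + rowDfrom T j r c := by
    intro r hA c
    rcases L2 T j hj r c with h | ⟨c', hle, hp⟩
    · linarith
    rcases hp with ⟨hM2, hmin⟩ | ⟨hM1, hmin⟩
    · obtain ⟨l₂, he₂, hi₂⟩ := hM2
      have := O2 T j hT hj hG he₂ hi₂ hmin
      linarith
    · obtain ⟨l₁, he₁, hi₁⟩ := hM1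
      by_cases hcase : j + 1 < n
      · have hr : r = j + 1 := by
          have := idx_row_of_lt T hT he₁ (by omega)
          omega
        subst hr
        have hc'0 : c' = 0 := by
          by_contra h0
          have h0' : 0 < c' := Nat.pos_of_ne_zero h0
          rcases hez : T.entry (j + 1) 0 with _ | lz
          · exfalso
            have hcl := lt_rowLen_of_some T he₁
            have := (T.entry_isSome_iff (j + 1) 0).2 (by omega)
            simp [hez] at this
          have hwz : lz.idx ≤ l₁.idx := T.rows_weak (j + 1) 0 c' lz l₁ (Nat.zero_le c') hez he₁
          have hiz : lz.idx = j + 1 := by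
            rcases idx_cases T hT hez with h | h <;> omega
          exact hmin 0 h0' ⟨lz, hez, hiz⟩
        subst hc'0
        have hO3 := O3 T j hT hj hG
        rw [Arow_succ] at hO3
        linarith
      · have hj1 : l₁.idx = 2 * n - 1 - j := by omega
        have := O2 T j hT hj hG he₁ hj1 (fun c'' hc'' hM => hmin c'' hc''
          (by obtain ⟨l, he, hi⟩ := hM; exact ⟨l, he, by omega⟩))
        linarith
  intro r
  induction r with
  | zero =>
    apply key
    simp [Arow]
  | succ r ih =>
    apply key
    rw [Arow_succ]
    exact ih 0

end CoreEquiv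

/-! ### Bridges between words and the conditions `CW`, `CR` -/

section Bridge

variable {n : ℕ} (T : SSYT n) (j : ℕ)

/-- Column `c` of the tableau as a list of `d`-values. -/
def colListZ (c : ℕ) : List ℤ :=
  (List.range (2 * n)).filterMap fun r => (T.entry r c).map (dd j)

/-- Row `r` of the tableau, read right to left, as a list of `d`-values. -/
def rowListZ (r : ℕ) : List ℤ :=
  ((List.range (T.rowLen r)).reverse).filterMap fun c => (T.entry r c).map (dd j)

def Mw : List (List ℤ) := ((List.range (T.rowLen 0)).reverse).map (colListZ T j)

def Mr : List (List ℤ) := (List.range (2 * n)).map (rowListZ T j)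

lemma word_map_eq : T.word.map (dd j) = (Mw T j).flatten := by
  unfold SSYT.word SSYT.posList Mw
  rw [List.map_filterMap, List.filterMap_flatMap, ← List.flatMap_def]
  congr 1
  funext c
  rw [List.filterMap_filterMap]
  unfold colListZ
  congr 1
  funext r
  rcases h : decide (c < T.rowLen r) with _ | _
  · simp only [decide_eq_false_iff_not] at h
    simp [if_neg h, entry_eq_none T h]
  · simp only [decide_eq_true_eq] at h
    simp [if_pos h]

lemma wordFE_map_eq : T.wordFE.map (dd j) = (Mr T j).flatten := by
  unfold SSYT.wordFE Mr
  rw [List.map_flatMap, ← List.flatMap_def]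
  congr 1
  funext r
  rw [List.map_filterMap]
  rfl

lemma colListZ_sum (c : ℕ) : (colListZ T j c).sum = colPart T j c (2 * n) := by
  unfold colListZ
  rw [sum_filterMap_getD, sum_map_range]
  rfl

lemma colListZ_take (c m : ℕ) : ∃ ρ, ((colListZ T j c).take m).sum = colPart T j c ρ := by
  obtain ⟨i, hi⟩ := take_filterMap (fun r => (T.entry r c).map (dd j)) (List.range (2 * n)) m
  refine ⟨min i (2 * n), ?_⟩
  unfold colListZ
  rw [hi, List.take_range]
  rw [sum_filterMap_getD, sum_map_range]
  rfl

lemma colListZ_take_realize (c ρ : ℕ) (hρ : ρ ≤ 2 * n) :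
    ∃ m, m ≤ (colListZ T j c).length ∧ ((colListZ T j c).take m).sum = colPart T j c ρ := by
  obtain ⟨m, hm, hmt⟩ := filterMap_take_realize (fun r => (T.entry r c).map (dd j))
    (List.range (2 * n)) ρ
  refine ⟨m, ?_, ?_⟩
  · unfold colListZ; exact hm
  unfold colListZ
  rw [hmt, List.take_range, Nat.min_eq_left hρ]
  rw [sum_filterMap_getD, sum_map_range]
  rfl

lemma rowListZ_eq_map (r : ℕ) :
    rowListZ T j r = ((List.range (T.rowLen r)).reverse).map (dE T j r) := by
  unfold rowListZ
  apply filterMap_eq_map'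
  intro c hc
  rw [List.mem_reverse, List.mem_range] at hc
  obtain ⟨l, hl⟩ : ∃ l : Letter n, T.entry r c = some l := by
    rcases he : T.entry r c with _ | l
    · exfalso
      have := (T.entry_isSome_iff r c).2 hc
      simp [he] at this
    · exact ⟨l, rfl⟩
  rw [hl]
  simp [dE, hl]

lemma rowListZ_length (r : ℕ) : (rowListZ T j r).length = T.rowLen r := by
  rw [rowListZ_eq_map]
  simp

lemma sum_Ico_rowLen (r c : ℕ) :
    ∑ c' ∈ Finset.Ico c (T.rowLen r), dE T j r c' = rowDfrom T j r c := by
  unfold rowDfrom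
  apply Finset.sum_subset
  · apply Finset.Ico_subset_Ico (le_refl c) (rowLen_le_first T r)
  · intro x hx hx2
    simp only [Finset.mem_Ico] at hx hx2
    exact dE_of_none T j (by omega)

lemma rowListZ_take (r m : ℕ) :
    ∃ c, c ≤ T.rowLen r ∧ ((rowListZ T j r).take m).sum = rowDfrom T j r c := by
  have hm' : ((rowListZ T j r).take m).sum
      = ((rowListZ T j r).take (min m (T.rowLen r))).sum := by
    rcases le_or_gt m (T.rowLen r) with h | h
    · rw [Nat.min_eq_left h]
    · rw [Nat.min_eq_right (le_of_lt h), List.take_of_length_le (by rw [rowListZ_length]; omega),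
        List.take_of_length_le (by rw [rowListZ_length])]
  refine ⟨T.rowLen r - min m (T.rowLen r), by omega, ?_⟩
  rw [hm', rowListZ_eq_map]
  rw [reverse_range_take_sum (dE T j r) (min m (T.rowLen r)) (T.rowLen r) (min_le_right _ _)]
  exact sum_Ico_rowLen T j r _

lemma rowListZ_take_realize (r c : ℕ) (hc : c ≤ T.rowLen r) :
    ∃ m, m ≤ (rowListZ T j r).length ∧ ((rowListZ T j r).take m).sum = rowDfrom T j r c := by
  refine ⟨T.rowLen r - c, by rw [rowListZ_length]; omega, ?_⟩
  rw [rowListZ_eq_map]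
  rw [reverse_range_take_sum (dE T j r) (T.rowLen r - c) (T.rowLen r) (by omega)]
  rw [show T.rowLen r - (T.rowLen r - c) = c by omega]
  exact sum_Ico_rowLen T j r c

lemma rowListZ_sum (r : ℕ) : (rowListZ T j r).sum = rowDfrom T j r 0 := by
  rw [rowListZ_eq_map]
  have h := reverse_range_take_sum (dE T j r) (T.rowLen r) (T.rowLen r) (le_refl _)
  rw [List.take_of_length_le (by simp)] at h
  rw [h, Nat.sub_self]
  exact sum_Ico_rowLen T j r 0

lemma Mw_length : (Mw T j).length = T.rowLen 0 := by unfold Mw; simp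

lemma Mw_take_sum (i : ℕ) (hi : i ≤ T.rowLen 0) :
    (((Mw T j).take i).flatten).sum = Gg T j (T.rowLen 0 - i) := by
  unfold Mw
  rw [← List.map_take, List.sum_flatten, List.map_map]
  have : (List.sum ∘ colListZ T j) = fun c => colPart T j c (2 * n) := by
    funext c
    exact colListZ_sum T j c
  rw [this, List.map_take, reverse_range_take_sum _ i _ hi]
  rfl

lemma Mw_getD (i : ℕ) (hi : i < T.rowLen 0) :
    (Mw T j).getD i [] = colListZ T j (T.rowLen 0 - 1 - i) := by
  unfold Mw
  rw [List.getD_eq_getElem?_getD, List.getElem?_map, reverse_range_getD _ i hi]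
  rfl

lemma Mw_getD_nil (i : ℕ) (hi : T.rowLen 0 ≤ i) : (Mw T j).getD i [] = [] := by
  apply List.getD_eq_default
  rw [Mw_length]
  omega

lemma Mr_length : (Mr T j).length = 2 * n := by unfold Mr; simp

lemma Mr_take_sum (i : ℕ) :
    (((Mr T j).take i).flatten).sum = Arow T j (min i (2 * n)) := by
  unfold Mr
  rw [← List.map_take, List.sum_flatten, List.map_map, List.take_range]
  have : (List.sum ∘ rowListZ T j) = fun r => rowDfrom T j r 0 := by
    funext r
    exact rowListZ_sum T j r
  rw [this, sum_map_range]
  rfl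

lemma Mr_getD (i : ℕ) (hi : i < 2 * n) : (Mr T j).getD i [] = rowListZ T j i := by
  unfold Mr
  rw [List.getD_eq_getElem?_getD, List.getElem?_map, List.getElem?_range hi]
  rfl

lemma Mr_getD_nil (i : ℕ) (hi : 2 * n ≤ i) : (Mr T j).getD i [] = [] := by
  apply List.getD_eq_default
  rw [Mr_length]
  omega

lemma rowDfrom_zero_of_len_le {r c : ℕ} (h : T.rowLen r ≤ c) : rowDfrom T j r c = 0 :=
  Finset.sum_eq_zero fun c' hc' => dE_of_none T j
    (by simp only [Finset.mem_Ico] at hc'; omega)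

lemma Arow_stable {r : ℕ} (h : 2 * n ≤ r) : Arow T j r = Arow T j (2 * n) := by
  unfold Arow
  refine (Finset.sum_subset ?_ ?_).symm
  · intro x hx; simp at hx ⊢; omega
  · intro x _ hx
    simp only [Finset.mem_range, not_lt] at hx
    exact rowDfrom_zero_of_len_le T j (by rw [T.rows_bounded x hx])

/-- The word-side bridge. -/
lemma CW_iff_word : (∀ k, 0 ≤ ((T.word.map (dd j)).take k).sum) ↔ CW T j := by
  constructor
  · intro h c ρ
    rcases lt_or_ge c (T.rowLen 0) with hc | hc
    · rw [colPart_cap T j c ρ]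
      obtain ⟨m, hm, hmt⟩ := colListZ_take_realize T j c (min ρ (2 * n)) (min_le_right _ _)
      have hgd : (Mw T j).getD (T.rowLen 0 - 1 - c) [] = colListZ T j c := by
        rw [Mw_getD T j _ (by omega), show T.rowLen 0 - 1 - (T.rowLen 0 - 1 - c) = c by omega]
      obtain ⟨k, hk⟩ := flatten_take_realize (Mw T j) (T.rowLen 0 - 1 - c) m
        (by rw [hgd]; exact hm)
      have h2 := h k
      rw [word_map_eq, hk, Mw_take_sum T j _ (by omega), hgd, hmt,
        show T.rowLen 0 - (T.rowLen 0 - 1 - c) = c + 1 by omega] at h2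
      exact h2
    · rw [colPart_zero_of_ge T j (by omega), Gg_zero_of_ge T j (by omega)]
      norm_num
  · intro hCW k
    rw [word_map_eq]
    obtain ⟨i, m, hi, hs⟩ := flatten_take_sum (Mw T j) k
    rw [Mw_length] at hi
    rw [hs]
    rcases lt_or_ge i (T.rowLen 0) with hiL | hiL
    · rw [Mw_take_sum T j i (by omega), Mw_getD T j i hiL]
      obtain ⟨ρ, hρ⟩ := colListZ_take T j (T.rowLen 0 - 1 - i) m
      rw [hρ]
      have := hCW (T.rowLen 0 - 1 - i) ρ
      rw [show T.rowLen 0 - 1 - i + 1 = T.rowLen 0 - i by omega] at this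
      exact this
    · have hieq : i = T.rowLen 0 := by omega
      subst hieq
      rw [Mw_take_sum T j _ (le_refl _), Mw_getD_nil T j _ (le_refl _)]
      simp only [List.take_nil, List.sum_nil, add_zero]
      exact hG_of_CW T j hCW _
  
/-- The far-eastern-word-side bridge. -/
lemma CR_iff_wordFE : (∀ k, 0 ≤ ((T.wordFE.map (dd j)).take k).sum) ↔ CR T j := by
  constructor
  · intro h r c
    rcases lt_or_ge r (2 * n) with hr | hr
    · have hval : Arow T j r + rowDfrom T j r c
          = Arow T j r + rowDfrom T j r (min c (T.rowLen r)) := by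
        rcases le_or_gt c (T.rowLen r) with h' | h'
        · rw [Nat.min_eq_left h']
        · rw [Nat.min_eq_right (le_of_lt h'), rowDfrom_zero_of_len_le T j (le_of_lt h'),
            rowDfrom_zero_of_len_le T j (le_refl _)]
      rw [hval]
      obtain ⟨m, hm, hmt⟩ := rowListZ_take_realize T j r (min c (T.rowLen r)) (min_le_right _ _)
      obtain ⟨k, hk⟩ := flatten_take_realize (Mr T j) r m (by rw [Mr_getD T j r hr]; exact hm)
      have h2 := h k
      rw [wordFE_map_eq, hk, Mr_take_sum T j r, Nat.min_eq_left (le_of_lt hr),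
        Mr_getD T j r hr, hmt] at h2
      exact h2
    · have h1 : rowDfrom T j r c = 0 :=
        rowDfrom_zero_of_len_le T j (by rw [T.rows_bounded r hr]; omega)
      rw [h1, Arow_stable T j hr]
      obtain ⟨k, hk⟩ := flatten_take_realize (Mr T j) (2 * n) 0 (by simp)
      have h2 := h k
      rw [wordFE_map_eq, hk, Mr_take_sum T j _, Nat.min_self] at h2
      simpa using h2
  · intro hCR k
    rw [wordFE_map_eq]
    obtain ⟨i, m, hi, hs⟩ := flatten_take_sum (Mr T j) k
    rw [Mr_length] at hi
    rw [hs]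
    rcases lt_or_ge i (2 * n) with hiL | hiL
    · rw [Mr_take_sum T j i, Nat.min_eq_left (le_of_lt hiL), Mr_getD T j i hiL]
      obtain ⟨c, _, hc⟩ := rowListZ_take T j i m
      rw [hc]
      exact hCR i c
    · have hieq : i = 2 * n := by omega
      subst hieq
      rw [Mr_take_sum T j _, Nat.min_self, Mr_getD_nil T j _ (le_refl _)]
      simp only [List.take_nil, List.sum_nil, add_zero]
      have := hCR (2 * n) 0
      rw [rowDfrom_zero_of_len_le T j (by rw [T.rows_bounded (2 * n) (le_refl _)])] at this
      simpa using this

end Bridge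

/-! ### Final assembly -/

section Final

variable {n : ℕ}

lemma take_map_dd_sum (w : List (Letter n)) (j k : ℕ) :
    ((w.map (dd j)).take k).sum = wsum (w.take k) j - wsum (w.take k) (j + 1) := by
  rw [← List.map_take]
  unfold wsum
  rw [← sum_map_sub]
  rfl

lemma dominant_iff_aux (w : List (Letter n)) :
    Dominant w ↔ ∀ j k, 0 ≤ ((w.map (dd j)).take k).sum := by
  constructor
  · intro h j k
    rw [take_map_dd_sum]
    have := h k j
    linarith
  · intro h k j
    have := h j k
    rw [take_map_dd_sum] at this
    linarith

lemma sum_take_zero_of_ge (w : List (Letter n)) {j : ℕ} (hj : n ≤ j) (k : ℕ) :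
    ((w.map (dd j)).take k).sum = 0 := by
  apply List.sum_eq_zero
  intro x hx
  have hx2 := List.take_subset _ _ hx
  obtain ⟨l, _, rfl⟩ := List.mem_map.1 hx2
  exact dd_zero_of_ge j hj l

end Final

end DomProof

/-- Lemma `nondependenceofdominance`: for a tableau satisfying the
row-entry restriction and the cancellation property, the word `w(T)` is dominant iff
the far-eastern word `w'(T)` is dominant. -/
theorem dominant_word_iff_dominant_wordFE (n : ℕ) (T : SSYT n)
    (hT : RowRestriction T) (hc : Cancel T.word) :
    Dominant T.word ↔ Dominant T.wordFE := by
  rw [DomProof.dominant_iff_aux, DomProof.dominant_iff_aux]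
  constructor
  · intro h j
    rcases lt_or_ge j n with hj | hj
    · exact (DomProof.CR_iff_wordFE T j).2
        (DomProof.CR_of_CW T j hT hj ((DomProof.CW_iff_word T j).1 (h j)))
    · intro k
      rw [DomProof.sum_take_zero_of_ge _ hj]
  · intro h j
    rcases lt_or_ge j n with hj | hj
    · exact (DomProof.CW_iff_word T j).2
        (DomProof.CW_of_CR T j hT hj ((DomProof.CR_iff_wordFE T j).1 (h j)))
    · intro k
      rw [DomProof.sum_take_zero_of_ge _ hj]
end

section
/- Let T be a semi-standard Young tableau of shape λ and content μ with entries in {1 < ... < n < n̄ < ... < 1̄}, satisfying the row-entry restriction ((i,j) = 0 unless i = j or i = k̄, k < j) and whose word w(T) has the cancellation property. Then w(T) is dominant (i.e., T ∈ domres(λ,μ)) if and only if for every 1 ≤ i ≤ n−1 and every i ≤ l ≤ n: (i,i) − (i+1,i+1) − Σ_{k=i}^{l} [(ī,k) − ((i+1)-bar, k−1)] ≥ 0. -/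
open scoped BigOperators

namespace DomAux

variable {n : ℕ} {T : SSYT n}

lemma rowLen_anti {r r' : ℕ} (h : r ≤ r') : T.rowLen r' ≤ T.rowLen r :=
  antitone_nat_of_succ_le T.shape_antitone h

lemma entry_lt {r c : ℕ} {l : Letter n} (h : T.entry r c = some l) : c < T.rowLen r :=
  (T.entry_isSome_iff r c).1 (by simp [h])

lemma exists_entry {r c : ℕ} (h : c < T.rowLen r) : ∃ l, T.entry r c = some l :=
  Option.isSome_iff_exists.mp ((T.entry_isSome_iff r c).2 h)

lemma countP_range_sum (m : ℕ) (p : ℕ → Bool) :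
    (List.range m).countP p = ∑ r ∈ Finset.range m, (if p r then 1 else 0) := by
  induction m with
  | zero => simp
  | succ m ih =>
      rw [List.range_succ, List.countP_append, Finset.sum_range_succ, ih]
      simp [List.countP_cons]

lemma count_eq_sum (l : Letter n) (r : ℕ) :
    T.count l r = ∑ c ∈ Finset.range (T.rowLen r), (if T.entry r c = some l then 1 else 0) := by
  rw [SSYT.count, ← List.countP_eq_length_filter, countP_range_sum]
  simp

lemma count_le_rowLen (l : Letter n) (r : ℕ) : T.count l r ≤ T.rowLen r := by
  rw [count_eq_sum]
  calc ∑ c ∈ Finset.range (T.rowLen r), (if T.entry r c = some l then 1 else 0)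
      ≤ ∑ _c ∈ Finset.range (T.rowLen r), 1 := Finset.sum_le_sum (by intro x _; split <;> omega)
    _ = T.rowLen r := by simp

lemma count_ne_zero_of_entry {r c : ℕ} {l : Letter n} (h : T.entry r c = some l) :
    T.count l r ≠ 0 := by
  rw [count_eq_sum]
  intro h0
  have := (Finset.sum_eq_zero_iff.mp h0) c (Finset.mem_range.mpr (entry_lt h))
  simp [h] at this

lemma exists_entry_of_count {r : ℕ} {l : Letter n} (h : T.count l r ≠ 0) :
    ∃ c, T.entry r c = some l := by
  rw [count_eq_sum] at h
  by_contra hc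
  push_neg at hc
  exact h (Finset.sum_eq_zero fun c _ => by simp [hc c])

lemma entry_cases (hrr : RowRestriction T) {r c : ℕ} {l : Letter n} (h : T.entry r c = some l) :
    (∃ hr : r < n, l = Sum.inl ⟨r, hr⟩) ∨ ∃ k : Fin n, (k : ℕ) < r ∧ l = Sum.inr k :=
  hrr r l (count_ne_zero_of_entry h)

lemma idx_inj {l₁ l₂ : Letter n} (h : l₁.idx = l₂.idx) : l₁ = l₂ := by
  cases l₁ with
  | inl a => cases l₂ with
    | inl b => simp only [Letter.idx] at h; exact congrArg _ (Fin.ext h)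
    | inr b => exfalso; have ha := a.isLt; have hb := b.isLt; simp only [Letter.idx] at h; omega
  | inr a => cases l₂ with
    | inl b => exfalso; have ha := a.isLt; have hb := b.isLt; simp only [Letter.idx] at h; omega
    | inr b => have ha := a.isLt; have hb := b.isLt; simp only [Letter.idx] at h
               exact congrArg _ (Fin.ext (by omega))



/-- A barred letter `k̄` can only occur strictly below row `k`. -/
lemma row_gt_of_barred (hrr : RowRestriction T) {r c : ℕ} {k : Fin n} (h : T.entry r c = some (Sum.inr k)) :
    (k : ℕ) < r := by
  rcases entry_cases hrr h with ⟨hr, he⟩ | ⟨k', hk', he⟩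
  · exact absurd he (by simp)
  · cases he; exact hk'

/-- Above a barred letter `k̄`, every row `j ≤ k` carries the unbarred letter `j`. -/
lemma unbarred_above_barred (hrr : RowRestriction T) {r c : ℕ} {k : Fin n} (h : T.entry r c = some (Sum.inr k))
    {j : ℕ} (hj : j ≤ (k : ℕ)) :
    T.entry j c = some (Sum.inl ⟨j, lt_of_le_of_lt hj k.isLt⟩) := by
  have hjr : j < r := lt_of_le_of_lt hj (row_gt_of_barred hrr h)
  have hcell : c < T.rowLen j := lt_of_lt_of_le (entry_lt h) (rowLen_anti hjr.le)
  obtain ⟨l', hl'⟩ := exists_entry hcell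
  have hidx := T.cols_strict j r c l' _ hjr hl' h
  have hkn := k.isLt
  rcases entry_cases hrr hl' with ⟨hr, he⟩ | ⟨m, hm, he⟩
  · cases he; exact hl'
  · exfalso; cases he
    have hmn := m.isLt
    simp only [Letter.idx] at hidx
    omega

/-- The unbarred letters in row `j` form an initial segment of length `count`. -/
lemma unbarred_iff_lt_count (hrr : RowRestriction T) {j : ℕ} (hj : j < n) {c : ℕ} (hc : c < T.rowLen j) :
    T.entry j c = some (Sum.inl ⟨j, hj⟩) ↔ c < T.count (Sum.inl ⟨j, hj⟩) j := by
  constructor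
  · intro h
    have hall : ∀ c' ≤ c, T.entry j c' = some (Sum.inl ⟨j, hj⟩) := by
      intro c' hc'
      obtain ⟨l', hl'⟩ := exists_entry (lt_of_le_of_lt hc' hc)
      have hidx := T.rows_weak j c' c l' _ hc' hl' h
      rcases entry_cases hrr hl' with ⟨hr, he⟩ | ⟨m, hm, he⟩
      · cases he; exact hl'
      · exfalso; cases he
        have hmn := m.isLt
        simp only [Letter.idx] at hidx
        omega
    rw [count_eq_sum]
    calc c < c + 1 := Nat.lt_succ_self c
      _ = ∑ c' ∈ Finset.range (c+1), 1 := by simp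
      _ = ∑ c' ∈ Finset.range (c+1), (if T.entry j c' = some (Sum.inl ⟨j, hj⟩) then 1 else 0) := by
            refine Finset.sum_congr rfl fun c' hc' => ?_
            rw [hall c' (Nat.lt_succ_iff.mp (Finset.mem_range.mp hc'))]
            simp
      _ ≤ _ := Finset.sum_le_sum_of_subset
            (Finset.range_subset_range.mpr (Nat.succ_le_of_lt hc))
  · intro h
    by_contra hne
    obtain ⟨l, hl⟩ := exists_entry hc
    -- every column ≥ c in row j is not the unbarred letter j
    have hzero : ∀ c', c ≤ c' → T.entry j c' ≠ some (Sum.inl ⟨j, hj⟩) := by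
      intro c' hcc' he
      have hidx := T.rows_weak j c c' l _ hcc' hl he
      rcases entry_cases hrr hl with ⟨hr, hle⟩ | ⟨m, hm, hle⟩
      · cases hle; exact hne hl
      · cases hle
        have hmn := m.isLt
        simp only [Letter.idx] at hidx
        omega
    have : T.count (Sum.inl ⟨j, hj⟩) j ≤ c := by
      rw [count_eq_sum]
      calc ∑ c' ∈ Finset.range (T.rowLen j), (if T.entry j c' = some (Sum.inl ⟨j, hj⟩) then 1 else 0)
          ≤ ∑ c' ∈ Finset.range (T.rowLen j), (if c' < c then 1 else 0) := by
            refine Finset.sum_le_sum fun c' _ => ?_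
            by_cases hlt : c' < c
            · simp only [hlt, if_true]; split <;> omega
            · have := hzero c' (Nat.le_of_not_lt hlt)
              simp [this, hlt]
        _ = ((Finset.range (T.rowLen j)).filter (fun c' => c' < c)).card := by
              rw [Finset.card_filter]
        _ ≤ (Finset.range c).card := Finset.card_le_card (by
              intro x hx
              simp only [Finset.mem_filter, Finset.mem_range] at hx ⊢
              exact hx.2)
        _ = c := by simp
    omega

/-- If row `j+1` has the unbarred letter `j+1` at column `c`, row `j` has letter `j` there. -/
lemma unbarred_step (hrr : RowRestriction T) {j : ℕ} (hj : j + 1 < n) {c : ℕ}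
    (h : T.entry (j+1) c = some (Sum.inl ⟨j+1, hj⟩)) :
    T.entry j c = some (Sum.inl ⟨j, Nat.lt_of_succ_lt hj⟩) := by
  have hcell : c < T.rowLen j := lt_of_lt_of_le (entry_lt h) (rowLen_anti (Nat.le_succ j))
  obtain ⟨l', hl'⟩ := exists_entry hcell
  have hidx := T.cols_strict j (j+1) c l' _ (Nat.lt_succ_self j) hl' h
  rcases entry_cases hrr hl' with ⟨hr, he⟩ | ⟨m, hm, he⟩
  · cases he; exact hl'
  · exfalso; cases he
    have hmn := m.isLt
    simp only [Letter.idx] at hidx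
    omega

lemma count_succ_le (hrr : RowRestriction T) {j : ℕ} (hj : j + 1 < n) :
    T.count (Sum.inl ⟨j+1, hj⟩) (j+1) ≤ T.count (Sum.inl ⟨j, Nat.lt_of_succ_lt hj⟩) j := by
  set a := T.count (Sum.inl ⟨j+1, hj⟩) (j+1) with ha
  rcases Nat.eq_zero_or_pos a with h0 | hpos
  · omega
  · have hc : a - 1 < T.rowLen (j+1) := lt_of_lt_of_le (by omega : a - 1 < a)
      (count_le_rowLen _ _)
    have he := (unbarred_iff_lt_count hrr hj hc).mpr (by omega)
    have := (unbarred_iff_lt_count hrr (Nat.lt_of_succ_lt hj)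
      (lt_of_lt_of_le hc (rowLen_anti (Nat.le_succ j)))).mp (unbarred_step hrr hj he)
    omega

/-- Every column containing `k̄` lies strictly left of `count(k,k)`. -/
lemma barred_col_lt_count (hrr : RowRestriction T) {r c : ℕ} {k : Fin n} (h : T.entry r c = some (Sum.inr k)) :
    c < T.count (Sum.inl k) (k : ℕ) := by
  have hu := unbarred_above_barred hrr h (le_refl (k : ℕ))
  have hcell : c < T.rowLen (k : ℕ) := entry_lt hu
  have := (unbarred_iff_lt_count hrr k.isLt hcell).mp (by simpa using hu)
  simpa using this

/-- Occurrences of `k̄` in lower rows are strictly to the right. -/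
lemma barred_right_of_lt {r r' c c' : ℕ} {k : Fin n} (h : T.entry r c = some (Sum.inr k))
    (h' : T.entry r' c' = some (Sum.inr k)) (hrr' : r < r') : c' < c := by
  by_contra hcc
  push_neg at hcc
  have hcell : c' < T.rowLen r := lt_of_lt_of_le (entry_lt h') (rowLen_anti hrr'.le)
  obtain ⟨l, hl⟩ := exists_entry hcell
  have h1 := T.rows_weak r c c' _ _ hcc h hl
  have h2 := T.cols_strict r r' c' _ _ hrr' hl h'
  omega

/-- `(i+1)‾` in a column weakly right of an occurrence of `ī` sits in a strictly higher row. -/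
lemma fact_D {r r' x c' : ℕ} {i i1 : Fin n} (hii : (i1 : ℕ) = (i : ℕ) + 1)
    (h : T.entry r x = some (Sum.inr i)) (h' : T.entry r' c' = some (Sum.inr i1))
    (hc : x ≤ c') : r' < r := by
  by_contra hk
  push_neg at hk
  have hcell : c' < T.rowLen r := lt_of_lt_of_le (entry_lt h') (rowLen_anti hk)
  obtain ⟨l, hl⟩ := exists_entry hcell
  have h1 := T.rows_weak r x c' _ _ hc h hl
  have hin := i.isLt
  have hin1 := i1.isLt
  rcases eq_or_lt_of_le hk with he | hlt
  · rw [← he] at h'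
    rw [hl] at h'
    cases h'
    simp only [Letter.idx] at h1
    omega
  · have h2 := T.cols_strict r r' c' _ _ hlt hl h'
    simp only [Letter.idx] at h1 h2
    omega

/-- If `x` is the leftmost column of `ī` in row `r`, then every `(i+1)‾` in a row
above `r` lies in a column weakly right of `x`. -/
lemma fact_F {r r' x c' : ℕ} {i i1 : Fin n} (hii : (i1 : ℕ) = (i : ℕ) + 1)
    (hx : T.entry r x = some (Sum.inr i))
    (hmin : ∀ c'' < x, T.entry r c'' ≠ some (Sum.inr i))
    (h' : T.entry r' c' = some (Sum.inr i1)) (hr' : r' < r) : x ≤ c' := by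
  by_contra hcx
  push_neg at hcx
  have hin := i.isLt
  have hin1 := i1.isLt
  have hx1 : 1 ≤ x := by omega
  -- cell (r', x)
  have hcellx : x < T.rowLen r' := lt_of_lt_of_le (entry_lt hx) (rowLen_anti hr'.le)
  obtain ⟨l₁, hl₁⟩ := exists_entry hcellx
  have e1 := T.rows_weak r' c' x _ _ hcx.le h' hl₁
  have e2 := T.cols_strict r' r x _ _ hr' hl₁ hx
  have hl₁eq : l₁ = Sum.inr i1 := by
    apply idx_inj
    simp only [Letter.idx] at e1 e2 ⊢
    omega
  -- cell (r', x-1)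
  obtain ⟨l₂, hl₂⟩ := exists_entry (lt_trans (by omega : x - 1 < x) hcellx)
  have e3 := T.rows_weak r' c' (x-1) _ _ (by omega) h' hl₂
  have e4 := T.rows_weak r' (x-1) x _ _ (by omega) hl₂ hl₁
  have hl₂eq : l₂ = Sum.inr i1 := by
    apply idx_inj
    rw [hl₁eq] at e4
    simp only [Letter.idx] at e3 e4 ⊢
    omega
  -- cell (r, x-1)
  obtain ⟨l₃, hl₃⟩ := exists_entry (lt_trans (by omega : x - 1 < x) (entry_lt hx))
  have e5 := T.cols_strict r' r (x-1) _ _ hr' hl₂ hl₃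
  have e6 := T.rows_weak r (x-1) x _ _ (by omega) hl₃ hx
  have hl₃eq : l₃ = Sum.inr i := by
    apply idx_inj
    rw [hl₂eq] at e5
    simp only [Letter.idx] at e5 e6 ⊢
    omega
  exact hmin (x-1) (by omega) (hl₃eq ▸ hl₃)

/-- Contiguity of equal letters within a row. -/
lemma row_contig {r x c c' : ℕ} {l : Letter n} (h1 : T.entry r x = some l)
    (h2 : T.entry r c = some l) (hxc : x ≤ c') (hcc : c' ≤ c) :
    T.entry r c' = some l := by
  obtain ⟨l', hl'⟩ := exists_entry (lt_of_le_of_lt hcc (entry_lt h2))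
  have e1 := T.rows_weak r x c' _ _ hxc h1 hl'
  have e2 := T.rows_weak r c' c _ _ hcc hl' h2
  have : l' = l := idx_inj (by omega)
  exact this ▸ hl'

/-! Word machinery. -/

/-- The `c`-th column word of `T`, read top to bottom. -/
def colw (T : SSYT n) (c : ℕ) : List (Letter n) :=
  (List.range (2*n)).filterMap fun r => if c < T.rowLen r then T.entry r c else none

lemma word_eq_flatMap : T.word = ((List.range (T.rowLen 0)).reverse).flatMap (colw T) := by
  rw [SSYT.word, SSYT.posList, List.filterMap_flatMap]
  congr 1
  funext c
  rw [List.filterMap_filterMap]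
  unfold colw
  congr 1
  funext r
  by_cases h : c < T.rowLen r <;> simp [h]

lemma mem_colw {l : Letter n} {c : ℕ} : l ∈ colw T c ↔ ∃ r, T.entry r c = some l := by
  simp only [colw, List.mem_filterMap, List.mem_range]
  constructor
  · rintro ⟨r, hr, h⟩
    split at h
    · exact ⟨r, h⟩
    · simp at h
  · rintro ⟨r, h⟩
    have hc := entry_lt h
    have hr2 : r < 2*n := by
      by_contra hr
      have := T.rows_bounded r (by omega)
      omega
    exact ⟨r, hr2, by simp [hc, h]⟩

/-- Count of a letter in a list (avoiding `BEq`). -/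
def lcount (l : Letter n) (w : List (Letter n)) : ℕ :=
  w.countP (fun x => decide (x = l))

lemma lcount_nil (l : Letter n) : lcount l [] = 0 := rfl

lemma lcount_append (l : Letter n) (w₁ w₂ : List (Letter n)) :
    lcount l (w₁ ++ w₂) = lcount l w₁ + lcount l w₂ := List.countP_append

lemma lcount_pos_of_mem {l : Letter n} {w : List (Letter n)} (h : l ∈ w) : 1 ≤ lcount l w :=
  List.countP_pos_iff.mpr ⟨l, h, by simp⟩

lemma mem_of_lcount_pos {l : Letter n} {w : List (Letter n)} (h : 1 ≤ lcount l w) : l ∈ w := by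
  obtain ⟨a, ha, he⟩ := List.countP_pos_iff.mp h
  simp only [decide_eq_true_eq] at he
  exact he ▸ ha

lemma lcount_eq_zero_of_not_mem {l : Letter n} {w : List (Letter n)} (h : l ∉ w) :
    lcount l w = 0 := by
  by_contra h0
  exact h (mem_of_lcount_pos (by omega))

lemma lcount_filterMap {α : Type*} (l : Letter n) (f : α → Option (Letter n)) (L : List α) :
    lcount l (L.filterMap f) = L.countP (fun a => decide (f a = some l)) := by
  induction L with
  | nil => rfl
  | cons a L ih =>
      rw [List.countP_cons, List.filterMap_cons]
      cases he : f a with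
      | none => rw [ih]; simp [he]
      | some l' =>
          have : lcount l (l' :: L.filterMap f) = lcount l (L.filterMap f) + (if l' = l then 1 else 0) := by
            simp [lcount, List.countP_cons]
          rw [this, ih]
          congr 1
          simp

lemma ccnt_eq_sum (l : Letter n) (c : ℕ) :
    lcount l (colw T c) = ∑ r ∈ Finset.range (2*n), (if T.entry r c = some l then 1 else 0) := by
  rw [colw, lcount_filterMap, countP_range_sum]
  refine Finset.sum_congr rfl fun r _ => ?_
  by_cases h : c < T.rowLen r
  · simp [h]
  · have hne : T.entry r c ≠ some l := fun he => h (entry_lt he)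
    simp [h, hne]

lemma ccnt_le_one (l : Letter n) (c : ℕ) : lcount l (colw T c) ≤ 1 := by
  rw [ccnt_eq_sum, ← Finset.card_filter]
  refine Finset.card_le_one.mpr fun a ha b hb => ?_
  simp only [Finset.mem_filter] at ha hb
  rcases lt_trichotomy a b with h | h | h
  · exact absurd (T.cols_strict a b c l l h ha.2 hb.2) (lt_irrefl _)
  · exact h
  · exact absurd (T.cols_strict b a c l l h hb.2 ha.2) (lt_irrefl _)

/-! `wsum` lemmas -/

lemma wsum_nil (j : ℕ) : wsum ([] : List (Letter n)) j = 0 := rfl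

lemma wsum_cons (l : Letter n) (w : List (Letter n)) (j : ℕ) :
    wsum (l :: w) j = wt l j + wsum w j := by simp [wsum]

lemma wsum_append (w₁ w₂ : List (Letter n)) (j : ℕ) :
    wsum (w₁ ++ w₂) j = wsum w₁ j + wsum w₂ j := by
  simp [wsum]

lemma wsum_flatMap {α : Type*} (L : List α) (f : α → List (Letter n)) (j : ℕ) :
    wsum (L.flatMap f) j = (L.map fun a => wsum (f a) j).sum := by
  induction L with
  | nil => rfl
  | cons a L ih => rw [List.flatMap_cons, wsum_append, ih, List.map_cons, List.sum_cons]

lemma wsum_eq_count (w : List (Letter n)) (j : ℕ) (hj : j < n) :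
    wsum w j = (lcount (Sum.inl ⟨j, hj⟩) w : ℤ) - (lcount (Sum.inr ⟨j, hj⟩) w : ℤ) := by
  induction w with
  | nil => simp [wsum_nil, lcount_nil]
  | cons l w ih =>
      have hc : ∀ l' : Letter n, lcount l' (l :: w) = lcount l' w + (if l = l' then 1 else 0) := by
        intro l'; simp [lcount, List.countP_cons]
      rw [wsum_cons, ih, hc, hc]
      cases l with
      | inl a =>
          by_cases h : (a : ℕ) = j
          · have ha : (Sum.inl a : Letter n) = Sum.inl ⟨j, hj⟩ := by
              congr 1; exact Fin.ext h
            have hb : (Sum.inl a : Letter n) ≠ Sum.inr ⟨j, hj⟩ := by simp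
            simp only [wt, h, if_true, ha, if_neg (ha ▸ hb)]
            push_cast; ring
          · have ha : (Sum.inl a : Letter n) ≠ Sum.inl ⟨j, hj⟩ := by
              simp [Fin.ext_iff]; omega
            have hb : (Sum.inl a : Letter n) ≠ Sum.inr ⟨j, hj⟩ := by simp
            simp only [wt, h, if_false, if_neg ha, if_neg hb]
            push_cast; ring
      | inr a =>
          by_cases h : (a : ℕ) = j
          · have ha : (Sum.inr a : Letter n) = Sum.inr ⟨j, hj⟩ := by
              congr 1; exact Fin.ext h
            have hb : (Sum.inr a : Letter n) ≠ Sum.inl ⟨j, hj⟩ := by simp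
            simp only [wt, h, if_true, ha, if_neg hb]
            push_cast; ring
          · have ha : (Sum.inr a : Letter n) ≠ Sum.inl ⟨j, hj⟩ := by simp
            have hb : (Sum.inr a : Letter n) ≠ Sum.inr ⟨j, hj⟩ := by
              simp [Fin.ext_iff]; omega
            simp only [wt, h, if_false, if_neg ha, if_neg hb]
            push_cast; ring

lemma wsum_zero_of_ge (w : List (Letter n)) {j : ℕ} (hj : n ≤ j) : wsum w j = 0 := by
  induction w with
  | nil => rfl
  | cons l w ih =>
      have h : wt l j = 0 := by
        cases l with
        | inl a => have := a.isLt; simp only [wt]; rw [if_neg (by omega)]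
        | inr a => have := a.isLt; simp only [wt]; rw [if_neg (by omega)]
      rw [wsum_cons, h, ih, add_zero]

lemma wsum_nonneg_of (w : List (Letter n)) (j : ℕ) (h : ∀ l ∈ w, 0 ≤ wt l j) :
    0 ≤ wsum w j := by
  induction w with
  | nil => simp [wsum_nil]
  | cons l w ih =>
      rw [wsum_cons]
      have h1 := h l List.mem_cons_self
      have h2 := ih fun l' hl' => h l' (List.mem_cons_of_mem _ hl')
      omega

lemma colw_pairwise (c : ℕ) : (colw T c).Pairwise (fun a b => a.idx < b.idx) := by
  rw [colw, List.pairwise_filterMap]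
  refine (List.pairwise_lt_range (n := 2*n)).imp ?_
  intro r r' hrr' b hb b' hb'
  split at hb
  · split at hb'
    · exact T.cols_strict r r' c b b' hrr' hb hb'
    · simp at hb'
  · simp at hb

/-! Counting over column suffixes. -/

lemma sum_le_of_support_subset {s t : Finset ℕ} {f : ℕ → ℕ}
    (h : ∀ x ∈ s, f x ≠ 0 → x ∈ t) : ∑ x ∈ s, f x ≤ ∑ x ∈ t, f x := by
  rw [← Finset.sum_filter_of_ne h]
  refine Finset.sum_le_sum_of_subset ?_
  intro x hx
  simp only [Finset.mem_filter] at hx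
  exact hx.2

/-- Number of occurrences of `l` in columns `≥ c`. -/
def Ncnt (T : SSYT n) (l : Letter n) (c : ℕ) : ℕ :=
  ∑ c' ∈ Finset.Ico c (T.rowLen 0), lcount l (colw T c')

lemma Ncnt_eq_sum_rows (l : Letter n) (c : ℕ) :
    Ncnt T l c = ∑ r ∈ Finset.range (2*n),
      ∑ c' ∈ Finset.Ico c (T.rowLen 0), (if T.entry r c' = some l then 1 else 0) := by
  rw [Ncnt]
  rw [Finset.sum_comm]
  exact Finset.sum_congr rfl fun c' _ => ccnt_eq_sum l c'

lemma Ncnt_le (l : Letter n) (c : ℕ) (S : Finset ℕ)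
    (hS : ∀ r c', c ≤ c' → T.entry r c' = some l → r ∈ S) :
    Ncnt T l c ≤ ∑ r ∈ S, T.count l r := by
  rw [Ncnt_eq_sum_rows]
  have step1 : ∑ r ∈ Finset.range (2*n),
      (∑ c' ∈ Finset.Ico c (T.rowLen 0), (if T.entry r c' = some l then 1 else 0)) ≤
      ∑ r ∈ S, (∑ c' ∈ Finset.Ico c (T.rowLen 0), (if T.entry r c' = some l then 1 else 0)) := by
    apply sum_le_of_support_subset
    intro r _ hne
    obtain ⟨c', hc', hterm⟩ := Finset.exists_ne_zero_of_sum_ne_zero hne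
    simp only [Finset.mem_Ico] at hc'
    by_cases he : T.entry r c' = some l
    · exact hS r c' hc'.1 he
    · simp [he] at hterm
  refine step1.trans (Finset.sum_le_sum fun r _ => ?_)
  rw [count_eq_sum]
  apply sum_le_of_support_subset
  intro c' _ hne
  have he : T.entry r c' = some l := by
    by_contra h; simp [h] at hne
  exact Finset.mem_range.mpr (entry_lt he)

lemma Ncnt_ge (l : Letter n) (c : ℕ) (S : Finset ℕ)
    (hS : ∀ r ∈ S, ∀ c', T.entry r c' = some l → c ≤ c') :
    ∑ r ∈ S, T.count l r ≤ Ncnt T l c := by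
  rw [Ncnt_eq_sum_rows]
  have step1 : ∑ r ∈ S, T.count l r ≤
      ∑ r ∈ S, (∑ c' ∈ Finset.Ico c (T.rowLen 0), (if T.entry r c' = some l then 1 else 0)) := by
    refine Finset.sum_le_sum fun r hr => ?_
    rw [count_eq_sum]
    apply sum_le_of_support_subset
    intro c' _ hne
    have he : T.entry r c' = some l := by
      by_contra h; simp [h] at hne
    have h1 := hS r hr c' he
    have h2 : c' < T.rowLen 0 := lt_of_lt_of_le (entry_lt he) (rowLen_anti (Nat.zero_le r))
    exact Finset.mem_Ico.mpr ⟨h1, h2⟩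
  refine step1.trans ?_
  apply sum_le_of_support_subset
  intro r _ hne
  obtain ⟨c', _, hterm⟩ := Finset.exists_ne_zero_of_sum_ne_zero hne
  have he : T.entry r c' = some l := by
    by_contra h; simp [h] at hterm
  have : 0 < T.rowLen r := lt_of_le_of_lt (Nat.zero_le c') (entry_lt he)
  refine Finset.mem_range.mpr ?_
  by_contra hr
  have := T.rows_bounded r (by omega)
  omega

lemma ccnt_unbarred (hrr : RowRestriction T) {j : ℕ} (hj : j < n) (c : ℕ) :
    lcount (Sum.inl ⟨j, hj⟩) (colw T c)
      = if c < T.count (Sum.inl ⟨j, hj⟩) j then 1 else 0 := by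
  by_cases h : c < T.count (Sum.inl ⟨j, hj⟩) j
  · rw [if_pos h]
    have hc : c < T.rowLen j := lt_of_lt_of_le h (count_le_rowLen _ _)
    have he := (unbarred_iff_lt_count hrr hj hc).mpr h
    have hmem : (Sum.inl ⟨j, hj⟩ : Letter n) ∈ colw T c := mem_colw.mpr ⟨j, he⟩
    exact le_antisymm (ccnt_le_one _ _) (lcount_pos_of_mem hmem)
  · rw [if_neg h]
    apply lcount_eq_zero_of_not_mem
    intro hmem
    obtain ⟨r, he⟩ := mem_colw.mp hmem
    rcases entry_cases hrr he with ⟨hr, heq⟩ | ⟨k, hk, heq⟩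
    · have : r = j := by
        have := congrArg Letter.idx heq
        simp only [Letter.idx] at this
        omega
      subst this
      exact h ((unbarred_iff_lt_count hrr hj (entry_lt he)).mp he)
    · simp at heq

lemma count_le_C (l : Letter n) (r : ℕ) : T.count l r ≤ T.rowLen 0 :=
  (count_le_rowLen l r).trans (rowLen_anti (Nat.zero_le r))

lemma Ncnt_unbarred (hrr : RowRestriction T) {j : ℕ} (hj : j < n) (c : ℕ) :
    Ncnt T (Sum.inl ⟨j, hj⟩) c
      = T.count (Sum.inl ⟨j, hj⟩) j - min c (T.count (Sum.inl ⟨j, hj⟩) j) := by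
  have hC := count_le_C (T := T) (Sum.inl ⟨j, hj⟩) j
  rw [Ncnt]
  rw [Finset.sum_congr rfl fun c' _ => ccnt_unbarred hrr hj c']
  rw [← Finset.card_filter, Finset.Ico_filter_lt, Nat.card_Ico]
  omega

lemma Ncnt_barred_le (hrr : RowRestriction T) (k : Fin n) (c : ℕ) :
    Ncnt T (Sum.inr k) c
      ≤ T.count (Sum.inl k) (k : ℕ) - min c (T.count (Sum.inl k) (k : ℕ)) := by
  have hC := count_le_C (T := T) (Sum.inl k) (k : ℕ)
  rw [Ncnt]
  have step : ∀ c' ∈ Finset.Ico c (T.rowLen 0),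
      lcount (Sum.inr k) (colw T c') ≤ (if c' < T.count (Sum.inl k) (k : ℕ) then 1 else 0) := by
    intro c' _
    by_cases h0 : lcount (Sum.inr k) (colw T c') = 0
    · rw [h0]; exact Nat.zero_le _
    · have h1 : 1 ≤ lcount (Sum.inr k) (colw T c') := by omega
      obtain ⟨r, he⟩ := mem_colw.mp (mem_of_lcount_pos h1)
      have := barred_col_lt_count hrr he
      rw [if_pos this]
      exact ccnt_le_one _ _
  calc ∑ c' ∈ Finset.Ico c (T.rowLen 0), lcount (Sum.inr k) (colw T c')
      ≤ ∑ c' ∈ Finset.Ico c (T.rowLen 0), (if c' < T.count (Sum.inl k) (k : ℕ) then 1 else 0) :=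
        Finset.sum_le_sum step
    _ = ((Finset.Ico c (T.rowLen 0)).filter
          (fun c' => c' < T.count (Sum.inl k) (k : ℕ))).card := (Finset.card_filter _ _).symm
    _ ≤ _ := by
        rw [Finset.Ico_filter_lt, Nat.card_Ico]
        have heq : T.rowLen 0 ⊓ T.count (Sum.inl k) (k : ℕ) = T.count (Sum.inl k) (k : ℕ) :=
          inf_eq_right.mpr hC
        omega

/-! Rows `≥ n` are empty (uses the cancellation property). -/

lemma rows_ge_empty (hrr : RowRestriction T) (hc : Cancel T.word) :
    ∀ r, n ≤ r → T.rowLen r = 0 := by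
  have key : T.rowLen n = 0 := by
    rcases Nat.eq_zero_or_pos n with hn | hn
    · exact hn ▸ T.rows_bounded 0 (by omega)
    by_contra h0
    -- the largest nonempty row r⋆ is ≥ n
    have hex : ∃ m, T.rowLen m = 0 := ⟨2*n, T.rows_bounded _ le_rfl⟩
    set m := Nat.find hex with hm
    have hm0 : T.rowLen m = 0 := Nat.find_spec hex
    have hmin : ∀ r < m, T.rowLen r ≠ 0 := fun r hr => Nat.find_min hex hr
    have hmn : n < m := by
      rcases Nat.lt_or_ge n m with h | h
      · exact h
      · exact absurd (le_antisymm (hm0 ▸ rowLen_anti h) (Nat.zero_le _)) h0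
    have hm2n : m ≤ 2*n := Nat.find_le (T.rows_bounded _ le_rfl)
    set rs := m - 1 with hrs
    have hrs_pos : 0 < T.rowLen rs := Nat.pos_of_ne_zero (hmin rs (by omega))
    have hCpos : 0 < T.rowLen 0 := lt_of_lt_of_le hrs_pos (rowLen_anti (Nat.zero_le rs))
    -- decompose the word as w₀ ++ [l⋆]
    obtain ⟨ls, hls⟩ := exists_entry hrs_pos
    have hcol0 : colw T 0 = ((List.range rs).filterMap
        fun r => if 0 < T.rowLen r then T.entry r 0 else none) ++ [ls] := by
      rw [colw]
      have hrange : List.range rs ++ [rs] = List.range m := by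
        rw [← List.range_succ]; congr 1; omega
      have : List.range (2*n) = (List.range rs ++ [rs]) ++ List.range' m (2*n - m) := by
        rw [hrange, List.range_eq_range', List.range_eq_range']
        have h2 := List.range'_append_1 (s := 0) (m := m) (n := 2*n - m)
        simp only [Nat.zero_add] at h2
        rw [h2]
        congr 1
        omega
      rw [this, List.filterMap_append, List.filterMap_append]
      have h2 : (List.range' m (2*n - m)).filterMap
          (fun r => if 0 < T.rowLen r then T.entry r 0 else none) = [] := by
        rw [List.filterMap_eq_nil_iff]
        intro a ha
        have := (List.mem_range'_1.mp ha).1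
        have : T.rowLen a = 0 := le_antisymm (hm0 ▸ rowLen_anti this) (Nat.zero_le _)
        simp [this]
      rw [h2, List.append_nil]
      congr 1
      simp [hrs_pos, hls]
    have hword : ∃ w₀ : List (Letter n), T.word = w₀ ++ [ls] := by
      rw [word_eq_flatMap]
      have hsplit : List.range (T.rowLen 0) = 0 :: List.range' 1 (T.rowLen 0 - 1) := by
        rw [List.range_eq_range']
        conv_lhs => rw [show T.rowLen 0 = (T.rowLen 0 - 1) + 1 from by omega]
        rw [List.range'_succ]
      rw [hsplit]
      rw [List.reverse_cons, List.flatMap_append]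
      refine ⟨((List.range' 1 (T.rowLen 0 - 1)).reverse).flatMap (colw T)
        ++ ((List.range rs).filterMap fun r => if 0 < T.rowLen r then T.entry r 0 else none), ?_⟩
      rw [List.append_assoc]
      congr 1
      simp [hcol0]
    obtain ⟨w₀, hw₀⟩ := hword
    -- l⋆ is barred
    obtain ⟨k, hk⟩ : ∃ k : Fin n, ls = Sum.inr k := by
      rcases entry_cases hrr hls with ⟨hr, _⟩ | ⟨k, _, heq⟩
      · omega
      · exact ⟨k, heq⟩
    -- contradiction with cancellation
    have hpos : T.word[w₀.length]? = some (Sum.inr k) := by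
      rw [hw₀, ← hk]
      exact List.getElem?_concat_length
    obtain ⟨q, hq, hq2⟩ := hc w₀.length k hpos
    have hqlt : q < T.word.length := (List.getElem?_eq_some_iff.mp hq2).1
    rw [hw₀] at hqlt
    simp only [List.length_append, List.length_cons, List.length_nil] at hqlt
    omega
  intro r hr
  exact le_antisymm (key ▸ rowLen_anti hr) (Nat.zero_le _)

/-! The per-column prefix estimate. -/

lemma gd_split (hrr : RowRestriction T) {i : ℕ} (hi : i + 1 < n) (c : ℕ)
    {q s : List (Letter n)} (hqs : colw T c = q ++ s) :
    wsum q (i+1) - wsum q i ≤ 0 ∨ 0 ≤ wsum s (i+1) - wsum s i := by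
  have hin : i < n := Nat.lt_of_succ_lt hi
  have hpw := colw_pairwise (T := T) c
  rw [hqs, List.pairwise_append] at hpw
  obtain ⟨hpq, hps, hcross⟩ := hpw
  rcases Classical.em ((Sum.inr ⟨i, hin⟩ : Letter n) ∈ q) with hVq | hVq
  · right
    have hzero : ∀ l : Letter n, l.idx ≤ 2*n - 1 - i → lcount l s = 0 := by
      intro l hl
      apply lcount_eq_zero_of_not_mem
      intro hls
      have h2 := hcross _ hVq l hls
      have h3 : Letter.idx (Sum.inr ⟨i, hin⟩ : Letter n) = 2*n - 1 - i := by
        simp [Letter.idx]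
      omega
    rw [wsum_eq_count s (i+1) hi, wsum_eq_count s i hin]
    rw [hzero (Sum.inl ⟨i, hin⟩) (by show (i : ℕ) ≤ _; omega),
      hzero (Sum.inl ⟨i+1, hi⟩) (by show (i+1 : ℕ) ≤ _; omega),
      hzero (Sum.inr ⟨i, hin⟩) (by show 2*n-1-i ≤ _; omega),
      hzero (Sum.inr ⟨i+1, hi⟩) (by show 2*n-1-(i+1) ≤ _; omega)]
    simp
  · left
    have hVq0 : lcount (Sum.inr ⟨i, hin⟩) q = 0 := lcount_eq_zero_of_not_mem hVq
    rw [wsum_eq_count q (i+1) hi, wsum_eq_count q i hin]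
    rcases Classical.em ((Sum.inl ⟨i+1, hi⟩ : Letter n) ∈ q) with hU1q | hU1q
    · -- row i+1 has letter i+1 in column c, hence row i has letter i
      have hU1col : (Sum.inl ⟨i+1, hi⟩ : Letter n) ∈ colw T c := by
        rw [hqs]; exact List.mem_append_left _ hU1q
      obtain ⟨r, hre⟩ := mem_colw.mp hU1col
      have hri : r = i + 1 := by
        rcases entry_cases hrr hre with ⟨hr, heq⟩ | ⟨k, _, heq⟩
        · have := congrArg Letter.idx heq
          simp only [Letter.idx] at this
          omega
        · exact absurd heq (by simp)
      subst hri
      have hUe := unbarred_step hrr hi hre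
      have hUcol : (Sum.inl ⟨i, hin⟩ : Letter n) ∈ colw T c := mem_colw.mpr ⟨i, hUe⟩
      have hUq : (Sum.inl ⟨i, hin⟩ : Letter n) ∈ q := by
        rcases List.mem_append.mp (hqs ▸ hUcol) with h | h
        · exact h
        · exfalso
          have h2 := hcross _ hU1q _ h
          simp only [Letter.idx] at h2
          omega
      have h1 : lcount (Sum.inl ⟨i+1, hi⟩) q ≤ 1 := by
        have h3 := ccnt_le_one (T := T) (Sum.inl ⟨i+1, hi⟩) c
        rw [hqs, lcount_append] at h3
        omega
      have h2 : 1 ≤ lcount (Sum.inl ⟨i, hin⟩) q := lcount_pos_of_mem hUq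
      rw [hVq0]
      push_cast
      omega
    · have h1 : lcount (Sum.inl ⟨i+1, hi⟩) q = 0 := lcount_eq_zero_of_not_mem hU1q
      rw [hVq0, h1]
      push_cast
      omega

/-! Suffix sums of the weight difference, and the main estimates. -/

lemma sum_range'_map (g : ℕ → ℤ) (a m : ℕ) :
    ((List.range' a m).map g).sum = ∑ c ∈ Finset.Ico a (a+m), g c := by
  induction m generalizing a with
  | zero => simp
  | succ m ih =>
      rw [List.range'_succ, List.map_cons, List.sum_cons, ih,
        Finset.sum_eq_sum_Ico_succ_bot (by omega : a < a + (m+1))]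
      have h2 : a + 1 + m = a + (m + 1) := by omega
      rw [h2]

lemma sum_range'_rev_map (g : ℕ → ℤ) (a m : ℕ) :
    (((List.range' a m).reverse).map g).sum = ∑ c ∈ Finset.Ico a (a+m), g c := by
  rw [List.map_reverse, List.sum_reverse, sum_range'_map]

lemma sum_shift (f : ℕ → ℕ) (a b : ℕ) :
    ∑ r ∈ Finset.Icc a b, f r = ∑ k ∈ Finset.Icc (a+1) (b+1), f (k-1) := by
  refine Finset.sum_nbij' (fun r => r + 1) (fun k => k - 1) ?_ ?_ ?_ ?_ ?_
  · intro r hr; simp only [Finset.mem_Icc] at *; omega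
  · intro r hr; simp only [Finset.mem_Icc] at *; omega
  · intro r hr; simp only [Finset.mem_Icc] at *; omega
  · intro r hr; simp only [Finset.mem_Icc] at *; omega
  · intro r hr; simp

/-- The weight-difference contribution of column `c` for coordinate `i`. -/
def gdcol (T : SSYT n) (i : ℕ) (c : ℕ) : ℤ :=
  wsum (colw T c) (i+1) - wsum (colw T c) i

/-- Suffix sums of the column contributions. -/
def Gfun (T : SSYT n) (i : ℕ) (c : ℕ) : ℤ :=
  ∑ c' ∈ Finset.Ico c (T.rowLen 0), gdcol T i c'

lemma colw_U_of_U1 (hrr : RowRestriction T) {i : ℕ} (hi : i + 1 < n) {c : ℕ}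
    (h : (Sum.inl ⟨i+1, hi⟩ : Letter n) ∈ colw T c) :
    (Sum.inl ⟨i, Nat.lt_of_succ_lt hi⟩ : Letter n) ∈ colw T c := by
  obtain ⟨r, hre⟩ := mem_colw.mp h
  have hri : r = i + 1 := by
    rcases entry_cases hrr hre with ⟨hr, heq⟩ | ⟨k, _, heq⟩
    · have := congrArg Letter.idx heq
      simp only [Letter.idx] at this
      omega
    · exact absurd heq (by simp)
  subst hri
  exact mem_colw.mpr ⟨i, unbarred_step hrr hi hre⟩

lemma colw_U1_of_V1 (hrr : RowRestriction T) {i : ℕ} (hi : i + 1 < n) {c : ℕ}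
    (h : (Sum.inr ⟨i+1, hi⟩ : Letter n) ∈ colw T c) :
    (Sum.inl ⟨i+1, hi⟩ : Letter n) ∈ colw T c := by
  obtain ⟨r, hre⟩ := mem_colw.mp h
  exact mem_colw.mpr ⟨i+1, by
    have := unbarred_above_barred hrr hre (le_refl ((⟨i+1, hi⟩ : Fin n) : ℕ))
    exact this⟩

lemma gdcol_nonpos (hrr : RowRestriction T) {i : ℕ} (hi : i + 1 < n) {c : ℕ}
    (hno : ∀ r, T.entry r c ≠ some (Sum.inr ⟨i, Nat.lt_of_succ_lt hi⟩)) :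
    gdcol T i c ≤ 0 := by
  have hin : i < n := Nat.lt_of_succ_lt hi
  rw [gdcol, wsum_eq_count _ _ hi, wsum_eq_count _ _ hin]
  have hV : lcount (Sum.inr ⟨i, hin⟩) (colw T c) = 0 := by
    apply lcount_eq_zero_of_not_mem
    intro hm
    obtain ⟨r, hr⟩ := mem_colw.mp hm
    exact hno r hr
  rcases Classical.em ((Sum.inl ⟨i+1, hi⟩ : Letter n) ∈ colw T c) with hU1 | hU1
  · have h1 : 1 ≤ lcount (Sum.inl ⟨i, hin⟩) (colw T c) :=
      lcount_pos_of_mem (colw_U_of_U1 hrr hi hU1)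
    have h2 := ccnt_le_one (T := T) (Sum.inl ⟨i+1, hi⟩) c
    have h4 : (0:ℕ) ≤ lcount (Sum.inr ⟨i+1, hi⟩) (colw T c) := Nat.zero_le _
    rw [hV]
    push_cast
    omega
  · have h1 : lcount (Sum.inl ⟨i+1, hi⟩) (colw T c) = 0 := lcount_eq_zero_of_not_mem hU1
    rw [hV, h1]
    push_cast
    omega

lemma gdcol_nonneg_of_V (hrr : RowRestriction T) {i : ℕ} (hi : i + 1 < n) {c r : ℕ}
    (hV : T.entry r c = some (Sum.inr ⟨i, Nat.lt_of_succ_lt hi⟩)) :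
    0 ≤ gdcol T i c := by
  have hin : i < n := Nat.lt_of_succ_lt hi
  rw [gdcol, wsum_eq_count _ _ hi, wsum_eq_count _ _ hin]
  have h1 : 1 ≤ lcount (Sum.inr ⟨i, hin⟩) (colw T c) :=
    lcount_pos_of_mem (mem_colw.mpr ⟨r, hV⟩)
  have h2 := ccnt_le_one (T := T) (Sum.inl ⟨i, hin⟩) c
  have h3 : 1 ≤ lcount (Sum.inl ⟨i, hin⟩) (colw T c) := by
    refine lcount_pos_of_mem (mem_colw.mpr ⟨i, ?_⟩)
    exact unbarred_above_barred hrr hV (le_refl _)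
  have h4 : lcount (Sum.inr ⟨i+1, hi⟩) (colw T c) ≤ lcount (Sum.inl ⟨i+1, hi⟩) (colw T c) := by
    rcases Classical.em ((Sum.inr ⟨i+1, hi⟩ : Letter n) ∈ colw T c) with hm | hm
    · have := lcount_pos_of_mem (colw_U1_of_V1 hrr hi hm)
      have := ccnt_le_one (T := T) (Sum.inr ⟨i+1, hi⟩) c
      omega
    · rw [lcount_eq_zero_of_not_mem hm]
      exact Nat.zero_le _
  omega

lemma Gfun_as_Ncnt {i : ℕ} (hi : i + 1 < n) (c : ℕ) :
    Gfun T i c = ((Ncnt T (Sum.inl ⟨i+1, hi⟩) c : ℤ) + (Ncnt T (Sum.inr ⟨i, Nat.lt_of_succ_lt hi⟩) c : ℤ))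
      - ((Ncnt T (Sum.inl ⟨i, Nat.lt_of_succ_lt hi⟩) c : ℤ) + (Ncnt T (Sum.inr ⟨i+1, hi⟩) c : ℤ)) := by
  have hin : i < n := Nat.lt_of_succ_lt hi
  rw [Gfun]
  have : ∀ c' ∈ Finset.Ico c (T.rowLen 0), gdcol T i c'
      = ((lcount (Sum.inl ⟨i+1, hi⟩) (colw T c') : ℤ) + (lcount (Sum.inr ⟨i, hin⟩) (colw T c') : ℤ))
        - ((lcount (Sum.inl ⟨i, hin⟩) (colw T c') : ℤ) + (lcount (Sum.inr ⟨i+1, hi⟩) (colw T c') : ℤ)) := by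
    intro c' _
    rw [gdcol, wsum_eq_count _ _ hi, wsum_eq_count _ _ hin]
    ring
  rw [Finset.sum_congr rfl this, Finset.sum_sub_distrib, Finset.sum_add_distrib,
    Finset.sum_add_distrib, Ncnt, Ncnt, Ncnt, Ncnt]
  push_cast
  ring

/-- The key estimate: the inequalities imply all suffix sums are nonpositive. -/
lemma Gfun_nonpos (hrr : RowRestriction T) (hz : ∀ r, n ≤ r → T.rowLen r = 0)
    {i : ℕ} (hi : i + 1 < n)
    (hineq : ∀ l : ℕ, i ≤ l → l < n →
      0 ≤ (T.count (Sum.inl ⟨i, Nat.lt_of_succ_lt hi⟩) i : ℤ) -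
          (T.count (Sum.inl ⟨i + 1, hi⟩) (i + 1) : ℤ) -
          ∑ k ∈ Finset.Icc i l,
            ((T.count (Sum.inr ⟨i, Nat.lt_of_succ_lt hi⟩) k : ℤ) -
              (T.count (Sum.inr ⟨i + 1, hi⟩) (k - 1) : ℤ))) :
    ∀ c, Gfun T i c ≤ 0 := by
  have hin : i < n := Nat.lt_of_succ_lt hi
  suffices H : ∀ d c, T.rowLen 0 ≤ c + d → Gfun T i c ≤ 0 by
    intro c
    exact H (T.rowLen 0) c (by omega)
  intro d
  induction d with
  | zero =>
      intro c hcd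
      rw [Gfun, Finset.Ico_eq_empty (by omega), Finset.sum_empty]
  | succ d ih =>
      intro c hcd
      rcases Nat.lt_or_ge c (T.rowLen 0) with hcC | hcC
      swap
      · rw [Gfun, Finset.Ico_eq_empty (by omega), Finset.sum_empty]
      rcases Classical.em (∃ r, T.entry r c = some (Sum.inr ⟨i, hin⟩)) with ⟨r₀, hr₀⟩ | hno
      · -- Case B: column c contains ī
        have hfind : ∃ x, T.entry r₀ x = some (Sum.inr ⟨i, hin⟩) := ⟨c, hr₀⟩
        obtain ⟨x, hx, hxmin⟩ : ∃ x, T.entry r₀ x = some (Sum.inr ⟨i, hin⟩) ∧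
            ∀ c'' < x, T.entry r₀ c'' ≠ some (Sum.inr ⟨i, hin⟩) :=
          ⟨Nat.find hfind, Nat.find_spec hfind, fun c'' h => Nat.find_min hfind h⟩
        have hxc : x ≤ c := by
          by_contra hcon
          exact hxmin c (by omega) hr₀
        -- Gfun c ≤ Gfun x
        have hsplit : Gfun T i x = (∑ c' ∈ Finset.Ico x c, gdcol T i c') + Gfun T i c := by
          rw [Gfun, Gfun, Finset.sum_Ico_consecutive _ hxc (le_of_lt hcC)]
        have hmid : 0 ≤ ∑ c' ∈ Finset.Ico x c, gdcol T i c' := by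
          refine Finset.sum_nonneg fun c' hc' => ?_
          simp only [Finset.mem_Ico] at hc'
          exact gdcol_nonneg_of_V hrr hi (row_contig hx hr₀ hc'.1 (le_of_lt hc'.2))
        suffices hGx : Gfun T i x ≤ 0 by omega
        -- direct estimate at the left end x of the block
        have hik : i < r₀ := by
          have := row_gt_of_barred hrr hx
          simpa using this
        have hkn : r₀ < n := by
          by_contra hge
          have := hz r₀ (by omega)
          have := entry_lt hx
          omega
        have hxA : x < T.count (Sum.inl ⟨i, hin⟩) i := by
          have := barred_col_lt_count hrr hx
          simpa using this
        have haa := count_succ_le hrr hi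
        rw [Gfun_as_Ncnt hi]
        have hNU : Ncnt T (Sum.inl ⟨i, hin⟩) x = T.count (Sum.inl ⟨i, hin⟩) i - x := by
          rw [Ncnt_unbarred hrr hin x, min_eq_left (le_of_lt hxA)]
        rcases Nat.lt_or_ge x (T.count (Sum.inl ⟨i+1, hi⟩) (i+1)) with hcase | hcase
        swap
        · -- x right of the i+1 initial segment: direct count bound
          have hNU1 : Ncnt T (Sum.inl ⟨i+1, hi⟩) x = 0 := by
            rw [Ncnt_unbarred hrr hi x, min_eq_right hcase, Nat.sub_self]
          have hNV := Ncnt_barred_le hrr ⟨i, hin⟩ x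
          simp only [Fin.val_mk] at hNV  -- coerce ↑⟨i,hin⟩
          rw [min_eq_left (le_of_lt hxA)] at hNV
          have hNV1 : (0:ℕ) ≤ Ncnt T (Sum.inr ⟨i+1, hi⟩) x := Nat.zero_le _
          have hNU' : Ncnt T (Sum.inl ⟨i, hin⟩) x + x = T.count (Sum.inl ⟨i, hin⟩) i := by
            omega
          have hNV' : Ncnt T (Sum.inr ⟨i, hin⟩) x + x ≤ T.count (Sum.inl ⟨i, hin⟩) i := by
            omega
          clear hNU hNV
          omega
        · -- x inside both initial segments
          have hNU1 : Ncnt T (Sum.inl ⟨i+1, hi⟩) x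
              = T.count (Sum.inl ⟨i+1, hi⟩) (i+1) - x := by
            rw [Ncnt_unbarred hrr hi x, min_eq_left (le_of_lt hcase)]
          have hNV : Ncnt T (Sum.inr ⟨i, hin⟩) x ≤
              ∑ r ∈ Finset.Icc i r₀, T.count (Sum.inr ⟨i, hin⟩) r := by
            refine Ncnt_le _ _ _ fun r c' hcc' he => ?_
            simp only [Finset.mem_Icc]
            constructor
            · have := row_gt_of_barred hrr he
              simp only [Fin.val_mk] at this
              omega
            · by_contra hlt
              have := barred_right_of_lt hx he (by omega)
              omega
          have hNV1 : ∑ r ∈ Finset.Icc i (r₀-1), T.count (Sum.inr ⟨i+1, hi⟩) r ≤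
              Ncnt T (Sum.inr ⟨i+1, hi⟩) x := by
            refine Ncnt_ge _ _ _ fun r hr c' he => ?_
            simp only [Finset.mem_Icc] at hr
            exact fact_F (by simp) hx hxmin he (by omega)
          have hre : ∑ r ∈ Finset.Icc i (r₀-1), T.count (Sum.inr ⟨i+1, hi⟩) r
              = ∑ k ∈ Finset.Icc (i+1) r₀, T.count (Sum.inr ⟨i+1, hi⟩) (k-1) := by
            have h9 : r₀ - 1 + 1 = r₀ := by omega
            rw [sum_shift, h9]
          have hlow : T.count (Sum.inr ⟨i+1, hi⟩) (i-1) = 0 := by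
            by_contra h0
            obtain ⟨c', he⟩ := exists_entry_of_count h0
            have := row_gt_of_barred hrr he
            simp only [Fin.val_mk] at this
            omega
          have hsub : ∑ k ∈ Finset.Icc i r₀, T.count (Sum.inr ⟨i+1, hi⟩) (k-1)
              = ∑ k ∈ Finset.Icc (i+1) r₀, T.count (Sum.inr ⟨i+1, hi⟩) (k-1) := by
            rw [show Finset.Icc i r₀ = Finset.Ico i (r₀+1) from (Finset.Ico_add_one_right_eq_Icc i r₀).symm,
              Finset.sum_eq_sum_Ico_succ_bot (by omega : i < r₀ + 1),
              Finset.Ico_add_one_right_eq_Icc, hlow]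
            omega
          have hIQ := hineq r₀ (le_of_lt hik) hkn
          rw [Finset.sum_sub_distrib] at hIQ
          rw [← Nat.cast_sum, ← Nat.cast_sum] at hIQ
          have hNU' : Ncnt T (Sum.inl ⟨i, hin⟩) x + x = T.count (Sum.inl ⟨i, hin⟩) i := by
            omega
          have hNU1' : Ncnt T (Sum.inl ⟨i+1, hi⟩) x + x = T.count (Sum.inl ⟨i+1, hi⟩) (i+1) := by
            omega
          clear hNU hNU1
          omega
      · -- Case A: no ī in column c
        have h1 : Gfun T i c = gdcol T i c + Gfun T i (c+1) := by
          rw [Gfun, Gfun, Finset.sum_eq_sum_Ico_succ_bot hcC]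
        have h2 := gdcol_nonpos hrr hi (fun r he => hno ⟨r, he⟩)
        have h3 := ih (c+1) (by omega)
        omega

/-! Prefix decomposition of a flattened list. -/

lemma take_flatMap_struct {α β : Type*} (f : α → List β) :
    ∀ (L : List α) (k : ℕ), ∃ s t, L = s ++ t ∧
      ((t = [] ∧ (L.flatMap f).take k = s.flatMap f) ∨
       (∃ b t' m, t = b :: t' ∧ m ≤ (f b).length ∧
         (L.flatMap f).take k = s.flatMap f ++ (f b).take m))
  | [], k => ⟨[], [], rfl, Or.inl ⟨rfl, by simp⟩⟩
  | a :: L, k => by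
      rcases le_or_gt k (f a).length with hk | hk
      · refine ⟨[], a :: L, rfl, Or.inr ⟨a, L, k, rfl, hk, ?_⟩⟩
        rw [List.flatMap_cons, List.take_append,
          show k - (f a).length = 0 from by omega]
        simp
      · obtain ⟨s, t, hst, hcase⟩ := take_flatMap_struct f L (k - (f a).length)
        refine ⟨a :: s, t, by rw [List.cons_append, hst], ?_⟩
        have hstep : ((a :: L).flatMap f).take k
            = f a ++ ((L.flatMap f).take (k - (f a).length)) := by
          rw [List.flatMap_cons, List.take_append,
            List.take_of_length_le (by omega)]
        rcases hcase with ⟨ht, htake⟩ | ⟨b, t', m, ht, hm, htake⟩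
        · exact Or.inl ⟨ht, by rw [hstep, htake, List.flatMap_cons]⟩
        · exact Or.inr ⟨b, t', m, ht, hm, by
            rw [hstep, htake, List.flatMap_cons, List.append_assoc]⟩

lemma wsum_colsum {jj : ℕ} (hjj : jj < n) (x : ℕ) :
    ∑ c' ∈ Finset.Ico x (T.rowLen 0), wsum (colw T c') jj
      = (Ncnt T (Sum.inl ⟨jj, hjj⟩) x : ℤ) - (Ncnt T (Sum.inr ⟨jj, hjj⟩) x : ℤ) := by
  rw [Finset.sum_congr rfl (fun c' _ => wsum_eq_count (colw T c') jj hjj),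
    Finset.sum_sub_distrib, Ncnt, Ncnt]
  push_cast
  ring

lemma Gfun_eq_sub {i : ℕ} (c : ℕ) :
    Gfun T i c = (∑ c' ∈ Finset.Ico c (T.rowLen 0), wsum (colw T c') (i+1))
      - (∑ c' ∈ Finset.Ico c (T.rowLen 0), wsum (colw T c') i) := by
  rw [Gfun, ← Finset.sum_sub_distrib]
  rfl

end DomAux

open DomAux in
/-- Prop. `dominanceinequalitiesdomres`: a semi-standard tableau of
shape `λ` and content `μ` satisfying the row-entry restriction and the cancellation
property has dominant word (i.e. lies in `domres(λ,μ)`) iff for all `1 ≤ i ≤ n-1`,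
`i ≤ l ≤ n` (here 0-indexed: `i+1 < n`, `i ≤ l < n`):
`(i,i) − (i+1,i+1) − ∑_{k=i}^{l} [(ī,k) − ((i+1)‾,k−1)] ≥ 0`. -/
theorem dominant_iff_inequalities (n : ℕ) (lam mu : ℕ → ℕ) (T : SSYT n)
    (hshape : T.rowLen = lam) (hwt : ∀ j, wsum T.word j = (mu j : ℤ))
    (hrr : RowRestriction T) (hc : Cancel T.word) :
    Dominant T.word ↔
      ∀ (i l : ℕ) (hi : i + 1 < n), i ≤ l → l < n →
        0 ≤ (T.count (Sum.inl ⟨i, Nat.lt_of_succ_lt hi⟩) i : ℤ) -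
            (T.count (Sum.inl ⟨i + 1, hi⟩) (i + 1) : ℤ) -
            ∑ k ∈ Finset.Icc i l,
              ((T.count (Sum.inr ⟨i, Nat.lt_of_succ_lt hi⟩) k : ℤ) -
                (T.count (Sum.inr ⟨i + 1, hi⟩) (k - 1) : ℤ)) := by
  classical
  have hz : ∀ r, n ≤ r → T.rowLen r = 0 := rows_ge_empty hrr hc
  constructor
  · -- Dominance implies the inequalities
    intro hdom i l hi hil hln
    have hin : i < n := Nat.lt_of_succ_lt hi
    have haa := count_succ_le hrr hi
    rcases Classical.em
        (∀ r ∈ Finset.Icc i l, T.count (Sum.inr ⟨i, hin⟩) r = 0) with hS | hS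
    · have hsum0 : ∑ k ∈ Finset.Icc i l,
          ((T.count (Sum.inr ⟨i, hin⟩) k : ℤ) -
            (T.count (Sum.inr ⟨i+1, hi⟩) (k-1) : ℤ)) ≤ 0 := by
        refine Finset.sum_nonpos fun r hr => ?_
        rw [hS r hr]
        have : (0:ℕ) ≤ T.count (Sum.inr ⟨i+1, hi⟩) (r-1) := Nat.zero_le _
        push_cast
        omega
      omega
    · push_neg at hS
      obtain ⟨k0', hk0'⟩ := hS
      -- the largest row in [i,l] containing ī
      have hne : ((Finset.Icc i l).filter
          (fun r => T.count (Sum.inr ⟨i, hin⟩) r ≠ 0)).Nonempty :=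
        ⟨k0', Finset.mem_filter.mpr hk0'⟩
      set k0 := ((Finset.Icc i l).filter
          (fun r => T.count (Sum.inr ⟨i, hin⟩) r ≠ 0)).max' hne with hk0def
      have hk0mem := Finset.max'_mem _ hne
      rw [Finset.mem_filter, Finset.mem_Icc] at hk0mem
      obtain ⟨⟨hik0le, hk0l⟩, hk0c⟩ := hk0mem
      have hk0max : ∀ r ∈ Finset.Icc i l, T.count (Sum.inr ⟨i, hin⟩) r ≠ 0 → r ≤ k0 :=
        fun r hr h0 => Finset.le_max' _ r (Finset.mem_filter.mpr ⟨hr, h0⟩)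
      obtain ⟨c₀, hc₀⟩ := exists_entry_of_count hk0c
      have hfind : ∃ x, T.entry k0 x = some (Sum.inr ⟨i, hin⟩) := ⟨c₀, hc₀⟩
      obtain ⟨x, hx, hxmin⟩ : ∃ x, T.entry k0 x = some (Sum.inr ⟨i, hin⟩) ∧
          ∀ c'' < x, T.entry k0 c'' ≠ some (Sum.inr ⟨i, hin⟩) :=
        ⟨Nat.find hfind, Nat.find_spec hfind, fun c'' h => Nat.find_min hfind h⟩
      have hik0 : i < k0 := by
        have := row_gt_of_barred hrr hx
        simpa using this
      have hxC : x ≤ T.rowLen 0 :=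
        le_of_lt (lt_of_lt_of_le (entry_lt hx) (rowLen_anti (Nat.zero_le k0)))
      -- the prefix consisting of all columns ≥ x
      have hsplitL : (List.range (T.rowLen 0)).reverse
          = ((List.range' x (T.rowLen 0 - x)).reverse) ++ ((List.range' 0 x).reverse) := by
        rw [List.range_eq_range']
        have happ := List.range'_append_1 (s := 0) (m := x) (n := T.rowLen 0 - x)
        simp only [Nat.zero_add] at happ
        conv_lhs => rw [show T.rowLen 0 = x + (T.rowLen 0 - x) from by omega, ← happ]
        rw [List.reverse_append]
      have hword2 : T.word = ((List.range' x (T.rowLen 0 - x)).reverse).flatMap (colw T)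
          ++ ((List.range' 0 x).reverse).flatMap (colw T) := by
        rw [word_eq_flatMap, hsplitL, List.flatMap_append]
      have hdm := hdom (((List.range' x (T.rowLen 0 - x)).reverse).flatMap (colw T)).length i
      rw [show T.word.take (((List.range' x (T.rowLen 0 - x)).reverse).flatMap (colw T)).length
          = ((List.range' x (T.rowLen 0 - x)).reverse).flatMap (colw T) from by
        rw [hword2]; exact List.take_left] at hdm
      have hF1 : ∀ jj, wsum (((List.range' x (T.rowLen 0 - x)).reverse).flatMap (colw T)) jj
          = ∑ c' ∈ Finset.Ico x (T.rowLen 0), wsum (colw T c') jj := by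
        intro jj
        rw [wsum_flatMap, sum_range'_rev_map,
          show x + (T.rowLen 0 - x) = T.rowLen 0 from by omega]
      rw [hF1, hF1, wsum_colsum hi, wsum_colsum hin] at hdm
      -- counting bounds
      have hNV : ∑ r ∈ Finset.Icc i l, T.count (Sum.inr ⟨i, hin⟩) r
          ≤ Ncnt T (Sum.inr ⟨i, hin⟩) x := by
        refine Ncnt_ge _ _ _ fun r hr c' he => ?_
        have hrk0 : r ≤ k0 := hk0max r hr (count_ne_zero_of_entry he)
        rcases eq_or_lt_of_le hrk0 with hrq | hrlt
        · subst hrq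
          by_contra hcon
          exact hxmin c' (by omega) he
        · exact le_of_lt (barred_right_of_lt he hx hrlt)
      have hNV1 : Ncnt T (Sum.inr ⟨i+1, hi⟩) x
          ≤ ∑ r ∈ Finset.Icc i (k0-1), T.count (Sum.inr ⟨i+1, hi⟩) r := by
        refine Ncnt_le _ _ _ fun r c' hcc' he => ?_
        simp only [Finset.mem_Icc]
        constructor
        · have := row_gt_of_barred hrr he
          simp only [Fin.val_mk] at this
          omega
        · have := fact_D (by simp) hx he hcc'
          omega
      have hre : ∑ r ∈ Finset.Icc i (k0-1), T.count (Sum.inr ⟨i+1, hi⟩) r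
          = ∑ k ∈ Finset.Icc (i+1) k0, T.count (Sum.inr ⟨i+1, hi⟩) (k-1) := by
        have h9 : k0 - 1 + 1 = k0 := by omega
        rw [sum_shift, h9]
      have hsub : ∑ k ∈ Finset.Icc (i+1) k0, T.count (Sum.inr ⟨i+1, hi⟩) (k-1)
          ≤ ∑ k ∈ Finset.Icc i l, T.count (Sum.inr ⟨i+1, hi⟩) (k-1) := by
        refine Finset.sum_le_sum_of_subset ?_
        intro t ht
        simp only [Finset.mem_Icc] at *
        omega
      have hxA : x < T.count (Sum.inl ⟨i, hin⟩) i := by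
        have := barred_col_lt_count hrr hx
        simpa using this
      have hNU : Ncnt T (Sum.inl ⟨i, hin⟩) x + x = T.count (Sum.inl ⟨i, hin⟩) i := by
        have h := Ncnt_unbarred hrr hin x
        rw [min_eq_left (le_of_lt hxA)] at h
        omega
      have hNU1' : T.count (Sum.inl ⟨i+1, hi⟩) (i+1) ≤ Ncnt T (Sum.inl ⟨i+1, hi⟩) x + x := by
        have h := Ncnt_unbarred hrr hi x
        rcases Nat.le_total x (T.count (Sum.inl ⟨i+1, hi⟩) (i+1)) with hcc | hcc
        · rw [min_eq_left hcc] at h; omega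
        · rw [min_eq_right hcc] at h; omega
      rw [Finset.sum_sub_distrib, ← Nat.cast_sum, ← Nat.cast_sum]
      omega
  · -- The inequalities imply dominance
    intro hineq k j
    rcases Nat.lt_or_ge (j+1) n with hj | hj
    swap
    · -- high coordinates: the RHS vanishes and the LHS is a sum of nonnegatives
      have h1 : wsum (T.word.take k) (j+1) = 0 := wsum_zero_of_ge _ (by omega)
      have h2 : 0 ≤ wsum (T.word.take k) j := by
        refine wsum_nonneg_of _ _ fun l' hl' => ?_
        have hlw : l' ∈ T.word := List.mem_of_mem_take hl'
        rw [word_eq_flatMap] at hlw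
        obtain ⟨c, _, hcw⟩ := List.mem_flatMap.mp hlw
        obtain ⟨r, he⟩ := mem_colw.mp hcw
        cases l' with
        | inl a => simp only [wt]; split <;> omega
        | inr a =>
            have hra := row_gt_of_barred hrr he
            have hrn : r < n := by
              by_contra hge
              have := hz r (by omega)
              have := entry_lt he
              omega
            simp only [wt]
            rw [if_neg (by omega)]
      omega
    · -- main coordinates
      have hin : j < n := Nat.lt_of_succ_lt hj
      have hG := Gfun_nonpos hrr hz hj (fun l hl hln => hineq j l hj hl hln)
      rw [word_eq_flatMap]
      obtain ⟨s, t, hst, hcase⟩ :=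
        take_flatMap_struct (colw T) ((List.range (T.rowLen 0)).reverse) k
      rcases hcase with ⟨ht, htake⟩ | ⟨b, t', m, ht, hm, htake⟩
      · subst ht
        rw [List.append_nil] at hst
        rw [htake, ← hst]
        have e : ∀ jj, wsum (((List.range (T.rowLen 0)).reverse).flatMap (colw T)) jj
            = ∑ c' ∈ Finset.Ico 0 (T.rowLen 0), wsum (colw T c') jj := by
          intro jj
          rw [List.range_eq_range', wsum_flatMap, sum_range'_rev_map, Nat.zero_add]
        rw [e, e]
        have h0 := hG 0
        rw [Gfun_eq_sub] at h0
        omega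
      · subst ht
        rw [htake]
        -- identify the column list s
        have h2 : List.range (T.rowLen 0) = t'.reverse ++ (b :: s.reverse) := by
          have h3 := congrArg List.reverse hst
          rw [List.reverse_reverse] at h3
          rw [h3, List.reverse_append, List.reverse_cons, List.append_assoc,
            List.singleton_append]
        rw [List.range_eq_range'] at h2
        obtain ⟨kk, hkkC, hxs, hys⟩ := List.range'_eq_append_iff.mp h2
        have hCk : 0 < T.rowLen 0 - kk := by
          rcases Nat.eq_zero_or_pos (T.rowLen 0 - kk) with h4 | h4
          · rw [h4] at hys; simp at hys
          · exact h4
        have hbs : b :: s.reverse = (0 + kk) :: List.range' (0 + kk + 1) (T.rowLen 0 - kk - 1) := by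
          rw [hys, show T.rowLen 0 - kk = (T.rowLen 0 - kk - 1) + 1 from by omega,
            List.range'_succ]
          simp
        have hb : b = kk := by
          have := congrArg List.head? hbs
          simp at this
          omega
        have hsrev : s.reverse = List.range' (kk + 1) (T.rowLen 0 - kk - 1) := by
          have := congrArg List.tail hbs
          simpa using this
        have hbC : b < T.rowLen 0 := by omega
        -- sums over the full columns
        have hsum : ∀ jj, wsum (s.flatMap (colw T)) jj
            = ∑ c' ∈ Finset.Ico (b+1) (T.rowLen 0), wsum (colw T c') jj := by
          intro jj
          rw [wsum_flatMap, show s = s.reverse.reverse from (List.reverse_reverse s).symm,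
            hsrev, sum_range'_rev_map,
            show kk + 1 + (T.rowLen 0 - kk - 1) = T.rowLen 0 from by omega,
            show kk + 1 = b + 1 from by omega]
        have hqs : colw T b = (colw T b).take m ++ (colw T b).drop m :=
          (List.take_append_drop _ _).symm
        have hcw : ∀ jj, wsum (colw T b) jj
            = wsum ((colw T b).take m) jj + wsum ((colw T b).drop m) jj := by
          intro jj
          conv_lhs => rw [hqs]
          rw [wsum_append]
        have hGb1 := hG (b+1)
        have hGb := hG b
        have hGbsplit : Gfun T j b = gdcol T j b + Gfun T j (b+1) :=
          Finset.sum_eq_sum_Ico_succ_bot hbC _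
        have hGeq : Gfun T j (b+1) = (∑ c' ∈ Finset.Ico (b+1) (T.rowLen 0), wsum (colw T c') (j+1))
            - (∑ c' ∈ Finset.Ico (b+1) (T.rowLen 0), wsum (colw T c') j) := Gfun_eq_sub _
        rw [wsum_append, wsum_append, hsum, hsum]
        rcases gd_split hrr hj b hqs with hle | hge
        · linarith [hGb1, hle, hGeq]
        · have hgd : gdcol T j b = wsum (colw T b) (j+1) - wsum (colw T b) j := rfl
          rw [hcw, hcw] at hgd
          linarith [hGb, hge, hGbsplit, hGeq, hgd]
end

section
/- Let T be an element of domres(λ,μ) (semi-standard tableau in alphabet {1<...<n<n̄<...<1̄} with dominant word). Then the entry count (i,j) of letter i in row j vanishes unless i = j or i = k̄ with 1 ≤ k ≤ j−1. In particular, row j can only contain the unbarred letter j and barred letters 1̄,...,(j−1)-bar. -/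
open scoped BigOperators

section Aux

open Classical

variable {n : ℕ}

lemma Letter.idx_inl (i : Fin n) : Letter.idx (Sum.inl i) = (i : ℕ) := rfl

lemma Letter.idx_inr (i : Fin n) : Letter.idx (Sum.inr i) = 2 * n - 1 - (i : ℕ) := rfl

lemma SSYT.rowLen_antitone (T : SSYT n) : Antitone T.rowLen :=
  antitone_nat_of_succ_le T.shape_antitone

lemma SSYT.entry_eq_some (T : SSYT n) {r c : ℕ} (h : c < T.rowLen r) :
    ∃ l, T.entry r c = some l := by
  have hs := (T.entry_isSome_iff r c).2 h
  exact ⟨(T.entry r c).get hs, (Option.some_get hs).symm⟩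

lemma SSYT.le_idx_of_entry (T : SSYT n) :
    ∀ (r c : ℕ) (l : Letter n), T.entry r c = some l → r ≤ l.idx := by
  intro r
  induction r with
  | zero => intro c l _; exact Nat.zero_le _
  | succ r ih =>
    intro c l h
    have hc : c < T.rowLen (r + 1) := (T.entry_isSome_iff _ _).1 (by rw [h]; rfl)
    have hc' : c < T.rowLen r := lt_of_lt_of_le hc (T.shape_antitone r)
    obtain ⟨l', hl'⟩ := T.entry_eq_some hc'
    exact (ih c l' hl').trans_lt (T.cols_strict r (r + 1) c l' l (Nat.lt_succ_self r) hl' h)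

/-- The word of one column of the tableau, read top to bottom. -/
def SSYT.colW (T : SSYT n) (c : ℕ) : List (Letter n) :=
  (List.range (2 * n)).filterMap fun r => T.entry r c

lemma SSYT.word_eq_flatMap (T : SSYT n) :
    T.word = ((List.range (T.rowLen 0)).reverse).flatMap T.colW := by
  unfold SSYT.word SSYT.posList SSYT.colW
  rw [List.filterMap_flatMap]
  congr 1
  funext c
  rw [List.filterMap_filterMap]
  congr 1
  funext r
  by_cases h : c < T.rowLen r
  · simp [h]
  · have : T.entry r c = none := by
      rcases ho : T.entry r c with _ | l
      · rfl
      · exact absurd ((T.entry_isSome_iff r c).1 (by rw [ho]; rfl)) h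
    simp [h, this]

lemma wsum_append (a b : List (Letter n)) (j : ℕ) :
    wsum (a ++ b) j = wsum a j + wsum b j := by
  unfold wsum; rw [List.map_append, List.sum_append]

lemma wsum_singleton (l : Letter n) (j : ℕ) : wsum [l] j = wt l j := by
  unfold wsum; simp

lemma wsum_eq_zero_of_le {j : ℕ} (hj : n ≤ j) (w : List (Letter n)) : wsum w j = 0 := by
  unfold wsum
  apply List.sum_eq_zero
  intro x hx
  rw [List.mem_map] at hx
  obtain ⟨l, _, rfl⟩ := hx
  rcases l with i | i <;> simp only [wt] <;>
    rw [if_neg (by exact Nat.ne_of_lt (lt_of_lt_of_le i.isLt hj))]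

lemma dom_prefix {w P Q : List (Letter n)} (hd : Dominant w) (h : w = P ++ Q) (j : ℕ) :
    wsum P (j + 1) ≤ wsum P j := by
  have := hd P.length j
  rwa [h, List.take_left] at this

lemma dom_chain {w P Q : List (Letter n)} (hd : Dominant w) (h : w = P ++ Q) {j j' : ℕ}
    (hjj : j ≤ j') : wsum P j' ≤ wsum P j := by
  induction j', hjj using Nat.le_induction with
  | base => exact le_refl _
  | succ m hm ih => exact (dom_prefix hd h m).trans ih

lemma dom_nonneg {w P Q : List (Letter n)} (hd : Dominant w) (h : w = P ++ Q) (j : ℕ) :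
    0 ≤ wsum P j := by
  rcases le_total n j with hj | hj
  · rw [wsum_eq_zero_of_le hj]
  · have := dom_chain hd h hj
    rwa [wsum_eq_zero_of_le le_rfl] at this

lemma wsum_nonpos {r : ℕ} {P : List (Letter n)}
    (h : ∀ l ∈ P, ∀ i : Fin n, l = Sum.inl i → (i : ℕ) ≠ r) : wsum P r ≤ 0 := by
  induction P with
  | nil => simp [wsum]
  | cons a t ih =>
    have h1 : wsum (a :: t) r = wt a r + wsum t r := by unfold wsum; simp
    have h2 : wt a r ≤ 0 := by
      rcases ha : a with i | i
      · simp only [wt]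
        rw [if_neg (h a (by simp [ha]) i ha)]
      · simp only [wt]
        split <;> omega
    have h3 : wsum t r ≤ 0 := ih fun l hl => h l (List.mem_cons_of_mem a hl)
    omega

end Aux

/-- Lemma `variablelemma`: every tableau in `domres(λ,μ)` satisfies the
row-entry restriction: the count `(i,j)` of letter `i` in row `j` vanishes unless `i = j`
or `i = k̄` with `k < j`. -/
theorem domres_rowRestriction (n : ℕ) (lam mu : ℕ → ℕ) (T : SSYT n)
    (hT : T ∈ domresSet n lam mu) : RowRestriction T := by
  classical
  obtain ⟨-, -, hdom⟩ := hT
  by_contra hcon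
  unfold RowRestriction at hcon
  push_neg at hcon
  obtain ⟨r0, l0, hcount, hgood0⟩ := hcon
  -- a "bad" box exists
  have hbox0 : ∃ c, T.entry r0 c = some l0 := by
    unfold SSYT.count at hcount
    have hne : ((List.range (T.rowLen r0)).filter fun c => T.entry r0 c = some l0) ≠ [] := by
      intro h; rw [h] at hcount; exact hcount rfl
    obtain ⟨c, hc⟩ := List.exists_mem_of_ne_nil _ hne
    rw [List.mem_filter] at hc
    exact ⟨c, by simpa using hc.2⟩
  -- the Bad predicate
  set Bad : ℕ → Letter n → Prop := fun r l =>
    ¬((∃ h : r < n, l = Sum.inl ⟨r, h⟩) ∨ (∃ k : Fin n, (k : ℕ) < r ∧ l = Sum.inr k)) with hBad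
  obtain ⟨c0, hc0⟩ := hbox0
  -- choose the rightmost bad column
  set Pc : ℕ → Prop := fun c => ∃ r l, T.entry r c = some l ∧ Bad r l with hPcdef
  have hc0lt : c0 < T.rowLen r0 := (T.entry_isSome_iff r0 c0).1 (by rw [hc0]; rfl)
  have hc0le : c0 ≤ T.rowLen 0 :=
    le_of_lt (lt_of_lt_of_le hc0lt (T.rowLen_antitone (Nat.zero_le r0)))
  have hbad0 : Bad r0 l0 := by
    simp only [hBad]
    push_neg
    exact hgood0
  have hPc0 : Pc c0 := ⟨r0, l0, hc0, hbad0⟩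
  set c := Nat.findGreatest Pc (T.rowLen 0) with hcdef
  have hPc : Pc c := Nat.findGreatest_spec hc0le hPc0
  have hmax : ∀ c' s l, c < c' → T.entry s c' = some l → ¬ Bad s l := by
    intro c' s l hcc' hsl hbadl
    have h1 : c' < T.rowLen s := (T.entry_isSome_iff s c').1 (by rw [hsl]; rfl)
    have h2 : c' ≤ T.rowLen 0 :=
      le_of_lt (lt_of_lt_of_le h1 (T.rowLen_antitone (Nat.zero_le s)))
    exact Nat.findGreatest_is_greatest hcc' h2 ⟨s, l, hsl, hbadl⟩
  -- choose the topmost bad row in column c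
  have hPcex : ∃ r, ∃ l, T.entry r c = some l ∧ Bad r l := hPc
  set r := Nat.find hPcex with hrdef
  obtain ⟨bad, hentry, hbad⟩ := Nat.find_spec hPcex
  have hmin : ∀ s l, s < r → T.entry s c = some l → ¬ Bad s l := by
    intro s l hs hsl hbadl
    exact Nat.find_min hPcex hs ⟨l, hsl, hbadl⟩
  -- basic facts
  have hcr : c < T.rowLen r := (T.entry_isSome_iff r c).1 (by rw [hentry]; rfl)
  have hr2n : r < 2 * n := by
    by_contra h
    rw [T.rows_bounded r (le_of_not_gt h)] at hcr; omega
  have hidx : r ≤ bad.idx := T.le_idx_of_entry r c bad hentry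
  have hidx' : r < bad.idx := by
    rcases hbv : bad with i | k
    · have hir : (i : ℕ) ≠ r := by
        intro h
        refine hbad (Or.inl ⟨lt_of_le_of_lt (le_of_eq (h.trans hrdef).symm) i.isLt, ?_⟩)
        rw [hbv]
        exact congrArg Sum.inl (Fin.ext (h.trans hrdef))
      rw [hbv, Letter.idx_inl] at hidx
      rw [Letter.idx_inl]
      omega
    · have hrk : r ≤ (k : ℕ) := by
        by_contra h
        exact hbad (Or.inr ⟨k, lt_of_not_ge h, hbv⟩)
      have hk := k.isLt
      rw [Letter.idx_inr]
      omega
  -- the word decomposition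
  set A : List (Letter n) :=
    (((List.range (T.rowLen 0 - (c + 1))).map (fun x => c + 1 + x)).reverse).flatMap T.colW
    with hAdef
  set colPre : List (Letter n) := (List.range r).filterMap (fun s => T.entry s c)
    with hPredef
  have hsplit : ∃ Q, T.word = (A ++ colPre) ++ [bad] ++ Q := by
    have hL0 : T.rowLen 0 = (c + 1) + (T.rowLen 0 - (c + 1)) := by
      have := lt_of_lt_of_le hcr (T.rowLen_antitone (Nat.zero_le r)); omega
    have h2n : 2 * n = (r + 1) + (2 * n - (r + 1)) := by omega
    have hcol : T.colW c = colPre ++ [bad] ++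
        ((List.range (2 * n - (r + 1))).map (fun x => r + 1 + x)).filterMap
          (fun s => T.entry s c) := by
      rw [hPredef]
      unfold SSYT.colW
      rw [h2n, List.range_add, List.filterMap_append, List.range_succ, List.filterMap_append]
      simp [show T.entry r c = some bad from hentry, List.filterMap_cons, List.filterMap_nil]
    refine ⟨(((List.range (2 * n - (r + 1))).map (fun x => r + 1 + x)).filterMap
      (fun s => T.entry s c)) ++ ((List.range c).reverse).flatMap T.colW, ?_⟩
    rw [T.word_eq_flatMap]
    conv_lhs => rw [hL0, List.range_add]
    rw [List.reverse_append, List.flatMap_append, List.range_succ, List.reverse_append,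
      List.flatMap_append]
    simp only [List.reverse_cons, List.reverse_nil, List.nil_append, List.flatMap_cons,
      List.flatMap_nil, List.append_nil]
    rw [hcol]
    simp [List.append_assoc, hAdef]
  obtain ⟨Q, hsplit⟩ := hsplit
  have hw1 : T.word = (A ++ colPre) ++ ([bad] ++ Q) := by rw [hsplit, List.append_assoc]
  have hw2 : T.word = ((A ++ colPre) ++ [bad]) ++ Q := hsplit
  -- no letter in the prefix is the unbarred letter r
  have hPnotl : ∀ l ∈ A ++ colPre, ∀ i : Fin n, l = Sum.inl i → (i : ℕ) ≠ r := by
    intro l hl i hli hir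
    rw [List.mem_append] at hl
    rcases hl with hl | hl
    · -- l is in a column strictly to the right of c
      rw [hAdef, List.mem_flatMap] at hl
      obtain ⟨c', hc'mem, hlc'⟩ := hl
      have hcc' : c < c' := by
        rw [List.mem_reverse, List.mem_map] at hc'mem
        obtain ⟨x, _, rfl⟩ := hc'mem; omega
      unfold SSYT.colW at hlc'
      rw [List.mem_filterMap] at hlc'
      obtain ⟨s, -, hsl⟩ := hlc'
      by_cases hsr : s = r
      · -- same row as the bad box: letter is to the right, so its idx is ≥ bad.idx > r
        subst hsr
        have hentry' : T.entry r c = some bad := by rw [hrdef]; exact hentry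
        have h5 := T.rows_weak r c c' bad l (le_of_lt hcc') hentry' hsl
        have h6 : l.idx = (i : ℕ) := by rw [hli, Letter.idx_inl]
        omega
      · have hgood := not_not.mp (hmax c' s l hcc' hsl)
        rcases hgood with ⟨hsn, hleq⟩ | ⟨k, _, hleq⟩
        · rw [hleq] at hli
          have h7 : s = (i : ℕ) := congrArg Fin.val (Sum.inl.inj hli)
          exact hsr (h7.trans hir)
        · rw [hleq] at hli; simp at hli
    · -- l is above the bad box in column c
      rw [hPredef, List.mem_filterMap] at hl
      obtain ⟨s, hsmem, hsl⟩ := hl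
      rw [List.mem_range] at hsmem
      have hgood := not_not.mp (hmin s l hsmem hsl)
      rcases hgood with ⟨hsn, hleq⟩ | ⟨k, _, hleq⟩
      · rw [hleq] at hli
        have h7 : s = (i : ℕ) := congrArg Fin.val (Sum.inl.inj hli)
        omega
      · rw [hleq] at hli; simp at hli
  have hPr : wsum (A ++ colPre) r ≤ 0 := wsum_nonpos hPnotl
  -- derive the contradiction
  rcases hbv : bad with i | k
  · -- bad = unbarred i with r < i
    have hri : r < (i : ℕ) := by rw [hbv, Letter.idx_inl] at hidx'; exact hidx'
    have h1 : 0 ≤ wsum (A ++ colPre) (i : ℕ) := dom_nonneg hdom hw1 _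
    have h2 : wsum ((A ++ colPre) ++ [bad]) (i : ℕ)
        = wsum (A ++ colPre) (i : ℕ) + 1 := by
      rw [wsum_append, wsum_singleton, hbv]
      simp [wt]
    have h3 : wsum ((A ++ colPre) ++ [bad]) r = wsum (A ++ colPre) r := by
      rw [wsum_append, wsum_singleton, hbv]
      simp only [wt]
      rw [if_neg (by omega)]
      ring
    have h4 : wsum ((A ++ colPre) ++ [bad]) (i : ℕ)
        ≤ wsum ((A ++ colPre) ++ [bad]) r := dom_chain hdom hw2 (le_of_lt hri)
    omega
  · -- bad = barred k with r ≤ k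
    have hrk : r ≤ (k : ℕ) := by
      by_contra h
      exact hbad (Or.inr ⟨k, lt_of_not_ge h, hbv⟩)
    have h1 : 0 ≤ wsum ((A ++ colPre) ++ [bad]) (k : ℕ) := dom_nonneg hdom hw2 _
    have h2 : wsum ((A ++ colPre) ++ [bad]) (k : ℕ)
        = wsum (A ++ colPre) (k : ℕ) - 1 := by
      rw [wsum_append, wsum_singleton, hbv]
      simp [wt, sub_eq_add_neg]
    have h3 : wsum (A ++ colPre) (k : ℕ) ≤ wsum (A ++ colPre) r :=
      dom_chain hdom hw1 hrk
    omega
end
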